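/- arXiv:2010.15194 — 6 statements merged into one kernel-verified Lean document; each statement's English description precedes it below -/
import Mathlib

section
/- Let ρ be an atomless, locally finite non-negative measure on [0, ∞) and a, b ∈ ℝ. Then the integral equation u(t) = a + b ∫_{[0,t]} u(s) dρ(s) for t ≥ 0 has the unique continuous solution u(t) = a · exp(b · ρ([0, t])). -/
open MeasureTheory Set

section StmtAux

variable {ρ : Measure ℝ}

lemma ifin (hfin : ∀ B : Set ℝ, Bornology.IsBounded B → ρ B < ⊤) (s t : ℝ) :
    ρ (Icc s t) ≠ ⊤ := (hfin _ (Metric.isBounded_Icc _ _)).ne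

lemma Fmono (hfin : ∀ B : Set ℝ, Bornology.IsBounded B → ρ B < ⊤) :
    Monotone (fun t => (ρ (Icc 0 t)).toReal) := fun _ t hst =>
  ENNReal.toReal_mono (ifin hfin 0 t) (measure_mono (Icc_subset_Icc_right hst))

lemma Fcont (hfin : ∀ B : Set ℝ, Bornology.IsBounded B → ρ B < ⊤)
    (hatom : ∀ t : ℝ, ρ {t} = 0) :
    Continuous (fun t => (ρ (Icc 0 t)).toReal) := by
  rw [Metric.continuous_iff]
  intro t ε hε
  have hInter : ⋂ n : ℕ, Icc (t - 1/(n+1)) (t + 1/(n+1)) = {t} := by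
    ext x
    simp only [mem_iInter, mem_Icc, mem_singleton_iff]
    constructor
    · intro h
      by_contra hx
      obtain ⟨n, hn⟩ := exists_nat_one_div_lt (abs_pos.mpr (sub_ne_zero.mpr hx))
      have h1 := (h n).1; have h2 := (h n).2
      rcases abs_cases (x - t) with ⟨he, _⟩ | ⟨he, _⟩ <;> rw [he] at hn <;> linarith
    · rintro rfl n
      have : (0:ℝ) < 1/((n:ℝ)+1) := by positivity
      constructor <;> linarith
  have htend : Filter.Tendsto (fun n : ℕ => ρ (Icc (t - 1/(n+1)) (t + 1/(n+1))))
      Filter.atTop (nhds 0) := by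
    have := tendsto_measure_iInter_atTop (μ := ρ)
      (s := fun n : ℕ => Icc (t - 1/(n+1)) (t + 1/(n+1)))
      (fun n => measurableSet_Icc.nullMeasurableSet)
      (fun m n hmn => by
        apply Icc_subset_Icc <;>
        · have : 1/((n:ℝ)+1) ≤ 1/((m:ℝ)+1) := by
            apply one_div_le_one_div_of_le (by positivity)
            have := (Nat.cast_le (α := ℝ)).mpr hmn; linarith
          linarith)
      ⟨0, ifin hfin _ _⟩
    rwa [hInter, hatom t] at this
  have htend' : Filter.Tendsto (fun n : ℕ => (ρ (Icc (t - 1/(n+1)) (t + 1/(n+1)))).toReal)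
      Filter.atTop (nhds 0) := by
    rw [← ENNReal.toReal_zero]
    exact (ENNReal.tendsto_toReal ENNReal.zero_ne_top).comp htend
  obtain ⟨n, hn⟩ := (htend'.eventually (gt_mem_nhds hε)).exists
  refine ⟨1/(n+1), by positivity, fun s hs => ?_⟩
  set δ : ℝ := 1/(n+1) with hδ
  have key : ∀ x y : ℝ, x ≤ y → |y - t| < δ → |x - t| < δ →
      (ρ (Icc 0 y)).toReal - (ρ (Icc 0 x)).toReal ≤ (ρ (Icc (t - δ) (t + δ))).toReal := by
    intro x y hxy hy hx
    have hsub : Icc (0:ℝ) y ⊆ Icc 0 x ∪ Icc (t - δ) (t + δ) := by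
      intro z hz
      rcases le_or_gt z x with h | h
      · exact Or.inl ⟨hz.1, h⟩
      · refine Or.inr ⟨?_, ?_⟩
        · rcases abs_lt.mp hx with ⟨hx1, _⟩; linarith
        · rcases abs_lt.mp hy with ⟨_, hy2⟩; linarith [hz.2]
    have h1 : ρ (Icc 0 y) ≤ ρ (Icc 0 x) + ρ (Icc (t - δ) (t + δ)) :=
      (measure_mono hsub).trans (measure_union_le _ _)
    have h2 := ENNReal.toReal_mono
      (ENNReal.add_ne_top.mpr ⟨ifin hfin _ _, ifin hfin _ _⟩) h1
    rw [ENNReal.toReal_add (ifin hfin _ _) (ifin hfin _ _)] at h2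
    linarith
  rw [Real.dist_eq] at hs ⊢
  have htt : |t - t| < δ := by simp [hδ]; positivity
  rcases le_total s t with h | h
  · have hm := Fmono hfin h
    have := key s t h htt hs
    simp only at hm ⊢
    rw [abs_sub_comm, abs_of_nonneg (by linarith [hm] : (0:ℝ) ≤ (ρ (Icc 0 t)).toReal - (ρ (Icc 0 s)).toReal)] at *
    linarith
  · have hm := Fmono hfin h
    have := key t s h hs htt
    simp only at hm ⊢
    rw [abs_of_nonneg (by linarith [hm] : (0:ℝ) ≤ (ρ (Icc 0 s)).toReal - (ρ (Icc 0 t)).toReal)]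
    linarith

lemma Fmap (hfin : ∀ B : Set ℝ, Bornology.IsBounded B → ρ B < ⊤)
    (hatom : ∀ t : ℝ, ρ {t} = 0) (t : ℝ) (ht : 0 ≤ t) :
    Measure.map (fun r => (ρ (Icc 0 r)).toReal) (ρ.restrict (Icc 0 t)) =
      volume.restrict (Icc 0 ((ρ (Icc 0 t)).toReal)) := by
  set F := fun r : ℝ => (ρ (Icc 0 r)).toReal with hF
  have hFm : Measurable F := (Fmono hfin).measurable
  have hF0 : F 0 = 0 := by simp [hF, Icc_self, hatom 0]
  have hFnn : ∀ r, 0 ≤ F r := fun r => ENNReal.toReal_nonneg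
  haveI hfinr : IsFiniteMeasure (ρ.restrict (Icc 0 t)) :=
    ⟨by rw [Measure.restrict_apply_univ]; exact hfin _ (Metric.isBounded_Icc _ _)⟩
  haveI : IsFiniteMeasure (Measure.map F (ρ.restrict (Icc 0 t))) :=
    Measure.isFiniteMeasure_map _ _
  refine Measure.ext_of_Iic _ _ (fun y => ?_)
  rw [Measure.map_apply hFm measurableSet_Iic,
    Measure.restrict_apply (hFm measurableSet_Iic), Measure.restrict_apply measurableSet_Iic]
  rcases lt_or_ge y 0 with hy | hy
  · have h1 : F ⁻¹' Iic y ∩ Icc 0 t = ∅ := by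
      ext r; simp only [mem_inter_iff, mem_preimage, mem_Iic, mem_empty_iff_false, iff_false]
      rintro ⟨h1, _⟩; exact absurd (le_trans (hFnn r) h1) (not_le.mpr hy)
    have h2 : Iic y ∩ Icc 0 (F t) = ∅ := by
      ext x; simp only [mem_inter_iff, mem_Iic, mem_Icc, mem_empty_iff_false, iff_false]
      rintro ⟨h1, h2, _⟩; linarith
    rw [h1, h2]; simp
  rcases le_or_gt (F t) y with hyt | hyt
  · have h1 : F ⁻¹' Iic y ∩ Icc 0 t = Icc 0 t :=
      inter_eq_right.mpr (fun r hr => le_trans (Fmono hfin hr.2) hyt)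
    have h2 : Iic y ∩ Icc 0 (F t) = Icc 0 (F t) :=
      inter_eq_right.mpr (fun x hx => le_trans hx.2 hyt)
    rw [h1, h2, Real.volume_Icc, sub_zero, hF, ENNReal.ofReal_toReal (ifin hfin 0 t)]
  · obtain ⟨τ, hτmem, hτ⟩ := intermediate_value_Icc ht ((Fcont hfin hatom).continuousOn)
      (show y ∈ Icc (F 0) (F t) from ⟨by rw [hF0]; exact hy, hyt.le⟩)
    set S := F ⁻¹' Iic y ∩ Icc 0 t with hS
    have hSc : IsClosed S := (isClosed_Iic.preimage (Fcont hfin hatom)).inter isClosed_Icc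
    have hSne : S.Nonempty := ⟨0, by simp [hS, mem_preimage, hF0, hy, ht]⟩
    have hSbdd : BddAbove S := bddAbove_Icc.mono inter_subset_right
    set τ' := sSup S with hτ'
    have hτ'S : τ' ∈ S := hSc.csSup_mem hSne hSbdd
    have hle1 : ρ S ≤ ENNReal.ofReal y := by
      have hsub : S ⊆ Icc 0 τ' := fun z hz => ⟨hz.2.1, le_csSup hSbdd hz⟩
      calc ρ S ≤ ρ (Icc 0 τ') := measure_mono hsub
        _ = ENNReal.ofReal (F τ') := (ENNReal.ofReal_toReal (ifin hfin 0 τ')).symm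
        _ ≤ ENNReal.ofReal y := ENNReal.ofReal_le_ofReal hτ'S.1
    have hle2 : ENNReal.ofReal y ≤ ρ S := by
      have hsub : Icc 0 τ ⊆ S := fun z hz =>
        ⟨le_trans (Fmono hfin hz.2) (le_of_eq hτ), hz.1, le_trans hz.2 hτmem.2⟩
      calc ENNReal.ofReal y = ENNReal.ofReal (F τ) := congrArg ENNReal.ofReal hτ.symm
        _ = ρ (Icc 0 τ) := ENNReal.ofReal_toReal (ifin hfin 0 τ)
        _ ≤ ρ S := measure_mono hsub
    have h2 : Iic y ∩ Icc 0 (F t) = Icc 0 y := by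
      ext x; simp only [mem_inter_iff, mem_Iic, mem_Icc]
      constructor
      · rintro ⟨h1, h2, _⟩; exact ⟨h2, h1⟩
      · rintro ⟨h1, h2⟩; exact ⟨h2, h1, le_trans h2 hyt.le⟩
    rw [le_antisymm hle1 hle2, h2, Real.volume_Icc, sub_zero]

lemma Fint (hfin : ∀ B : Set ℝ, Bornology.IsBounded B → ρ B < ⊤)
    (hatom : ∀ t : ℝ, ρ {t} = 0) (t : ℝ) (ht : 0 ≤ t) (g : ℝ → ℝ) (hg : Continuous g) :
    ∫ s in Icc 0 t, g ((ρ (Icc 0 s)).toReal) ∂ρ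
      = ∫ x in Icc 0 ((ρ (Icc 0 t)).toReal), g x := by
  have hFm : Measurable (fun r : ℝ => (ρ (Icc 0 r)).toReal) := (Fmono hfin).measurable
  rw [← Fmap hfin hatom t ht,
    integral_map hFm.aemeasurable hg.aestronglyMeasurable]

lemma int_exp {b : ℝ} (hb : b ≠ 0) (c : ℝ) (hc : 0 ≤ c) :
    ∫ x in Icc 0 c, Real.exp (b * x) = (Real.exp (b * c) - 1) / b := by
  rw [integral_Icc_eq_integral_Ioc, ← intervalIntegral.integral_of_le hc,
    intervalIntegral.integral_comp_mul_left _ hb, integral_exp]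
  simp [smul_eq_mul, div_eq_inv_mul]

lemma int_pow (n : ℕ) (c : ℝ) (hc : 0 ≤ c) :
    ∫ x in Icc 0 c, x ^ n = c ^ (n + 1) / (n + 1) := by
  rw [integral_Icc_eq_integral_Ioc, ← intervalIntegral.integral_of_le hc, integral_pow]
  simp

end StmtAux

theorem stmt_6 (ρ : Measure ℝ)
    (hfin : ∀ B : Set ℝ, Bornology.IsBounded B → ρ B < ⊤)
    (hatom : ∀ t : ℝ, ρ {t} = 0) (a b : ℝ) :
    ∃ u : ℝ → ℝ, ContinuousOn u (Set.Ici 0) ∧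
      (∀ t : ℝ, 0 ≤ t → u t = a + b * ∫ s in Set.Icc 0 t, u s ∂ρ) ∧
      (∀ t : ℝ, 0 ≤ t → u t = a * Real.exp (b * (ρ (Set.Icc 0 t)).toReal)) ∧
      (∀ v : ℝ → ℝ, ContinuousOn v (Set.Ici 0) →
        (∀ t : ℝ, 0 ≤ t → v t = a + b * ∫ s in Set.Icc 0 t, v s ∂ρ) →
        ∀ t : ℝ, 0 ≤ t → v t = u t) := by
  haveI : IsLocallyFiniteMeasure ρ :=
    ⟨fun x => ⟨Metric.ball x 1, Metric.ball_mem_nhds x one_pos,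
      hfin _ Metric.isBounded_ball⟩⟩
  set F : ℝ → ℝ := fun t => (ρ (Icc 0 t)).toReal with hFdef
  have hFc : Continuous F := Fcont hfin hatom
  have hFmono : Monotone F := Fmono hfin
  have hFnn : ∀ t, 0 ≤ F t := fun t => ENNReal.toReal_nonneg
  set u : ℝ → ℝ := fun t => a * Real.exp (b * F t) with hudef
  have huc : Continuous u := continuous_const.mul ((continuous_const.mul hFc).rexp)
  -- integrability of continuous-on-Ici functions on Icc 0 t
  have hInt : ∀ (f : ℝ → ℝ), ContinuousOn f (Ici 0) → ∀ t : ℝ, 0 ≤ t →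
      IntegrableOn f (Icc 0 t) ρ := fun f hf t ht =>
    (hf.mono (Icc_subset_Ici_self)).integrableOn_Icc
  -- u satisfies the integral equation
  have hueq : ∀ t : ℝ, 0 ≤ t → u t = a + b * ∫ s in Icc 0 t, u s ∂ρ := by
    intro t ht
    rcases eq_or_ne b 0 with rfl | hb
    · simp [hudef]
    · have h1 : ∫ s in Icc 0 t, u s ∂ρ = a * ∫ s in Icc 0 t, Real.exp (b * F s) ∂ρ := by
        rw [← integral_const_mul]
      have h2 : ∫ s in Icc 0 t, Real.exp (b * F s) ∂ρ = (Real.exp (b * F t) - 1) / b := by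
        rw [Fint hfin hatom t ht (fun x => Real.exp (b * x))
          (Real.continuous_exp.comp (continuous_const.mul continuous_id)),
          int_exp hb _ (hFnn t)]
      rw [h1, h2, hudef]
      field_simp
      ring
  -- moments
  have hmom : ∀ (n : ℕ) (t : ℝ), 0 ≤ t →
      ∫ s in Icc 0 t, (F s) ^ n ∂ρ = (F t) ^ (n + 1) / (n + 1) := by
    intro n t ht
    rw [Fint hfin hatom t ht (fun x => x ^ n) (continuous_pow n), int_pow n _ (hFnn t)]
  refine ⟨u, huc.continuousOn, hueq, fun t _ => rfl, ?_⟩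
  -- uniqueness
  intro v hvc hveq t0 ht0
  set w : ℝ → ℝ := fun s => v s - u s with hwdef
  have hwc : ContinuousOn w (Ici 0) := hvc.sub huc.continuousOn
  have hwint : ∀ s : ℝ, 0 ≤ s → IntegrableOn w (Icc 0 s) ρ := hInt w hwc
  have hweq : ∀ s : ℝ, 0 ≤ s → w s = b * ∫ r in Icc 0 s, w r ∂ρ := by
    intro s hs
    have := integral_sub (hInt v hvc s hs) (hInt u huc.continuousOn s hs)
    simp only [hwdef]
    rw [hveq s hs, hueq s hs, this]
    ring
  obtain ⟨M, hM⟩ := (isCompact_Icc (a := (0:ℝ)) (b := t0)).exists_bound_of_continuousOn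
    (hwc.mono Icc_subset_Ici_self)
  have claim : ∀ n : ℕ, ∀ s ∈ Icc (0:ℝ) t0, |w s| ≤ M * (|b| * F s) ^ n / n.factorial := by
    intro n
    induction n with
    | zero => intro s hs; simpa using hM s hs
    | succ n ih =>
      intro s hs
      have hs0 : 0 ≤ s := hs.1
      have hbound : ∀ r ∈ Icc (0:ℝ) s, |w r| ≤ (M * |b| ^ n / n.factorial) * (F r) ^ n := by
        intro r hr
        have := ih r ⟨hr.1, le_trans hr.2 hs.2⟩
        calc |w r| ≤ M * (|b| * F r) ^ n / n.factorial := this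
          _ = (M * |b| ^ n / n.factorial) * (F r) ^ n := by rw [mul_pow]; ring
      have hgint : IntegrableOn (fun r => (M * |b| ^ n / n.factorial) * (F r) ^ n)
          (Icc 0 s) ρ :=
        ((continuous_const.mul (hFc.pow n)).continuousOn).integrableOn_Icc
      have step1 : |w s| ≤ |b| * ∫ r in Icc 0 s, |w r| ∂ρ := by
        rw [hweq s hs0, abs_mul]
        gcongr
        exact (norm_integral_le_integral_norm w).trans (le_of_eq (by simp))
      have step2 : ∫ r in Icc 0 s, |w r| ∂ρ
          ≤ ∫ r in Icc 0 s, (M * |b| ^ n / n.factorial) * (F r) ^ n ∂ρ :=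
        setIntegral_mono_on (hwint s hs0).abs hgint measurableSet_Icc hbound
      have step3 : ∫ r in Icc 0 s, (M * |b| ^ n / n.factorial) * (F r) ^ n ∂ρ
          = (M * |b| ^ n / n.factorial) * ((F s) ^ (n + 1) / (n + 1)) := by
        rw [integral_const_mul, hmom n s hs0]
      have final : |b| * ((M * |b| ^ n / n.factorial) * ((F s) ^ (n + 1) / (n + 1)))
          = M * (|b| * F s) ^ (n + 1) / (n + 1).factorial := by
        rw [mul_pow, Nat.factorial_succ]
        push_cast
        field_simp
        ring
      calc |w s| ≤ |b| * ∫ r in Icc 0 s, |w r| ∂ρ := step1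
        _ ≤ |b| * ((M * |b| ^ n / n.factorial) * ((F s) ^ (n + 1) / (n + 1))) := by
            rw [← step3]; gcongr
        _ = M * (|b| * F s) ^ (n + 1) / (n + 1).factorial := final
  have htends : Filter.Tendsto (fun n : ℕ => M * (|b| * F t0) ^ n / n.factorial)
      Filter.atTop (nhds 0) := by
    have := (FloorSemiring.tendsto_pow_div_factorial_atTop (|b| * F t0)).const_mul M
    simpa [mul_div_assoc] using this
  have hle : |w t0| ≤ 0 :=
    ge_of_tendsto htends (Filter.Eventually.of_forall fun n => claim n t0 ⟨ht0, le_refl t0⟩)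
  have : w t0 = 0 := abs_eq_zero.mp (le_antisymm hle (abs_nonneg _))
  simpa [hwdef, sub_eq_zero] using this
end

section
/- For every ξ in the unit circle 𝕋 ⊂ ℂ and every n ∈ ℕ, one has |(ξ^n − 1 − i·n·Im(ξ)) / (1 − Re(ξ))| ≤ n^3, where the value at ξ = 1 is defined by continuous extension as −n^2. -/
open Finset

theorem stmt_8 (n : ℕ) (ξ : ℂ) (hξ : ‖ξ‖ = 1) :
    ‖(if ξ = 1 then (-(n ^ 2 : ℂ))
      else (ξ ^ n - 1 - Complex.I * n * ξ.im) / (1 - (ξ.re : ℂ)))‖ ≤ (n : ℝ) ^ 3 := by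
  have hn23 : (n : ℝ) ^ 2 ≤ (n : ℝ) ^ 3 := by
    rcases Nat.eq_zero_or_pos n with h | h
    · simp [h]
    · have h1 : (1:ℝ) ≤ (n:ℝ) := by exact_mod_cast h
      nlinarith
  split_ifs with h
  · simpa using hn23
  · -- ξ ≠ 1
    have hns : ξ.re ^ 2 + ξ.im ^ 2 = 1 := by
      have := Complex.sq_norm ξ
      rw [hξ] at this
      simp [Complex.normSq_apply] at this
      nlinarith [this]
    have hre_le : ξ.re ≤ 1 := by nlinarith [sq_nonneg ξ.im]
    have hre_lt : ξ.re < 1 := by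
      rcases lt_or_eq_of_le hre_le with h' | h'
      · exact h'
      · exfalso
        have him : ξ.im = 0 := by nlinarith
        exact h (Complex.ext (by simp [h']) (by simp [him]))
    have hpos : 0 < 1 - ξ.re := by linarith
    set S : ℂ := ∑ j ∈ range n, ξ ^ j with hS
    have hxi : (ξ.re : ℂ) = ξ - ξ.im * Complex.I := by
      have := Complex.re_add_im ξ
      linear_combination this
    have hg : S * (ξ - 1) = ξ ^ n - 1 := geom_sum_mul ξ n
    have hnum : ξ ^ n - 1 - Complex.I * n * ξ.im
        = (ξ - 1) * (S - n) + n * ((ξ.re : ℂ) - 1) := by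
      linear_combination -hg - (n : ℂ) * hxi
    -- bound |S - n|
    have habsk : ∀ k : ℕ, ‖(ξ ^ k - 1)‖ ≤ k * ‖(ξ - 1)‖ := by
      intro k
      have hgk : ξ ^ k - 1 = (∑ j ∈ range k, ξ ^ j) * (ξ - 1) := (geom_sum_mul ξ k).symm
      rw [hgk, norm_mul]
      have hb : ‖(∑ j ∈ range k, ξ ^ j)‖ ≤ k := by
        calc ‖(∑ j ∈ range k, ξ ^ j)‖ ≤ ∑ j ∈ range k, ‖(ξ ^ j)‖ :=
              norm_sum_le _ _
          _ = k := by simp [norm_pow, hξ]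
      exact mul_le_mul_of_nonneg_right hb (norm_nonneg _)
    have hSn : S - n = ∑ j ∈ range n, (ξ ^ j - 1) := by
      rw [Finset.sum_sub_distrib]
      simp [hS]
    set A : ℝ := ∑ j ∈ range n, (j : ℝ) with hA
    have hSbound : ‖(S - n)‖ ≤ A * ‖(ξ - 1)‖ := by
      rw [hSn]
      calc ‖(∑ j ∈ range n, (ξ ^ j - 1))‖
          ≤ ∑ j ∈ range n, ‖(ξ ^ j - 1)‖ := norm_sum_le _ _
        _ ≤ ∑ j ∈ range n, (j : ℝ) * ‖(ξ - 1)‖ :=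
            Finset.sum_le_sum fun j _ => habsk j
        _ = A * ‖(ξ - 1)‖ := by rw [hA, ← Finset.sum_mul]
    have hAval : 2 * A + n = (n : ℝ) ^ 2 := by
      have hnat : 2 * (∑ j ∈ range n, j) + n = n ^ 2 := by
        have := Finset.sum_range_id_mul_two n
        rcases n with _ | m
        · simp
        · have : (∑ j ∈ range (m + 1), j) * 2 = (m + 1) * m := by
            simpa using Finset.sum_range_id_mul_two (m + 1)
          nlinarith [this]
      have := congrArg (fun x : ℕ => (x : ℝ)) hnat
      push_cast at this
      simpa [hA] using this
    have hd : ‖(ξ - 1)‖ ^ 2 = 2 * (1 - ξ.re) := by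
      rw [Complex.sq_norm]
      simp [Complex.normSq_apply, Complex.sub_re, Complex.sub_im]
      nlinarith [hns]
    -- bound the numerator
    have hnumb : ‖(ξ ^ n - 1 - Complex.I * n * ξ.im)‖
        ≤ (n : ℝ) ^ 2 * (1 - ξ.re) := by
      rw [hnum]
      calc ‖((ξ - 1) * (S - n) + n * ((ξ.re : ℂ) - 1))‖
          ≤ ‖((ξ - 1) * (S - n))‖ + ‖((n : ℂ) * ((ξ.re : ℂ) - 1))‖ :=
            norm_add_le _ _
        _ ≤ ‖(ξ - 1)‖ * (A * ‖(ξ - 1)‖) + n * (1 - ξ.re) := by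
            rw [norm_mul, norm_mul]
            have t1 : ‖(ξ - 1)‖ * ‖(S - ↑n)‖
                ≤ ‖(ξ - 1)‖ * (A * ‖(ξ - 1)‖) :=
              mul_le_mul_of_nonneg_left hSbound (norm_nonneg _)
            have e1 : ‖((n : ℂ))‖ = (n : ℝ) := by
              simp
            have e2 : ‖((ξ.re : ℂ) - 1)‖ = 1 - ξ.re := by
              have : ((ξ.re : ℂ) - 1) = (((ξ.re - 1 : ℝ)) : ℂ) := by push_cast; ring
              rw [this, Complex.norm_real, Real.norm_eq_abs, abs_of_nonpos (by linarith)]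
              ring
            rw [e1, e2]
            linarith
        _ = A * ‖(ξ - 1)‖ ^ 2 + n * (1 - ξ.re) := by ring
        _ = A * (2 * (1 - ξ.re)) + n * (1 - ξ.re) := by rw [hd]
        _ = (2 * A + n) * (1 - ξ.re) := by ring
        _ = (n : ℝ) ^ 2 * (1 - ξ.re) := by rw [hAval]
    have hden : ‖(1 - (ξ.re : ℂ))‖ = 1 - ξ.re := by
      have : (1 - (ξ.re : ℂ)) = (((1 - ξ.re : ℝ)) : ℂ) := by push_cast; ring
      rw [this, Complex.norm_real, Real.norm_eq_abs, abs_of_pos hpos]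
    rw [norm_div, hden, div_le_iff₀ hpos]
    calc ‖(ξ ^ n - 1 - Complex.I * n * ξ.im)‖
        ≤ (n : ℝ) ^ 2 * (1 - ξ.re) := hnumb
      _ ≤ (n : ℝ) ^ 3 * (1 - ξ.re) := by nlinarith [hn23, hpos]
end

section
/- Let f, g : 𝔻 → 𝔻 be holomorphic self-maps of the unit disk with f(0) = g(0) = 0, and suppose g = f ∘ h for some holomorphic h : 𝔻 → 𝔻 with h(0) = 0 (i.e., g is subordinate to f through a zero-fixing map). Write α = Re[(f'(0) − g'(0))/(f'(0) + g'(0))] and β = Im[(f'(0) − g'(0))/(f'(0) + g'(0))]. Then α ≥ 0 and |z − h(z)| ≤ 2|z|·(α·(1+|z|)/(1−|z|) + |β|) for all z ∈ 𝔻. -/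
open Metric Set Complex

lemma aux_sq (u : ℂ) (t : ℝ) :
    ‖u + t‖^2 - ‖u - t‖^2 = 4*t*u.re := by
  simp [Complex.sq_norm, Complex.normSq_apply, Complex.add_re, Complex.add_im,
    Complex.sub_re, Complex.sub_im]
  ring

lemma aux_lt (u : ℂ) (t : ℝ) (ht : 0 < t) :
    ‖u - t‖ < ‖u + t‖ ↔ 0 < u.re := by
  have e := aux_sq u t
  constructor
  · intro hlt
    have h2 : ‖u - t‖^2 < ‖u + t‖^2 := by
      nlinarith [norm_nonneg (u - t), norm_nonneg (u + t)]
    nlinarith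
  · intro hre
    have h2 : ‖u - t‖^2 < ‖u + t‖^2 := by nlinarith
    nlinarith [norm_nonneg (u - t), norm_nonneg (u + t)]

lemma aux_le (u : ℂ) (t : ℝ) (ht : 0 < t)
    (h : ‖u - t‖ ≤ ‖u + t‖) : 0 ≤ u.re := by
  have e := aux_sq u t
  nlinarith [norm_nonneg (u - t), norm_nonneg (u + t)]

lemma aux_eq (u : ℂ) (t : ℝ) (ht : 0 < t)
    (h : ‖u - t‖ = ‖u + t‖) : u.re = 0 := by
  have e := aux_sq u t
  nlinarith [norm_nonneg (u - t), norm_nonneg (u + t)]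

theorem stmt_11 (f g h : ℂ → ℂ)
    (hf : DifferentiableOn ℂ f (Metric.ball 0 1))
    (hg : DifferentiableOn ℂ g (Metric.ball 0 1))
    (hh : DifferentiableOn ℂ h (Metric.ball 0 1))
    (hfm : Set.MapsTo f (Metric.ball 0 1) (Metric.ball 0 1))
    (hgm : Set.MapsTo g (Metric.ball 0 1) (Metric.ball 0 1))
    (hhm : Set.MapsTo h (Metric.ball 0 1) (Metric.ball 0 1))
    (hf0 : f 0 = 0) (hg0 : g 0 = 0) (hh0 : h 0 = 0)
    (hsub : ∀ z ∈ Metric.ball (0 : ℂ) 1, g z = f (h z))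
    (hne : deriv f 0 + deriv g 0 ≠ 0) :
    0 ≤ ((deriv f 0 - deriv g 0) / (deriv f 0 + deriv g 0)).re ∧
    ∀ z ∈ Metric.ball (0 : ℂ) 1,
      ‖z - h z‖ ≤ 2 * ‖z‖ *
        (((deriv f 0 - deriv g 0) / (deriv f 0 + deriv g 0)).re *
            (1 + ‖z‖) / (1 - ‖z‖)
          + |((deriv f 0 - deriv g 0) / (deriv f 0 + deriv g 0)).im|) := by
  have h0D : (0:ℂ) ∈ Metric.ball (0:ℂ) 1 := by simp
  have hnhds : Metric.ball (0:ℂ) 1 ∈ nhds (0:ℂ) := Metric.isOpen_ball.mem_nhds h0D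
  have hfa : DifferentiableAt ℂ f 0 := hf.differentiableAt hnhds
  have hha : DifferentiableAt ℂ h 0 := hh.differentiableAt hnhds
  have hgderiv : deriv g 0 = deriv f 0 * deriv h 0 := by
    have he : deriv g 0 = deriv (f ∘ h) 0 := by
      apply Filter.EventuallyEq.deriv_eq
      filter_upwards [hnhds] with z hz
      exact hsub z hz
    rw [he, deriv_comp 0 (by rwa [hh0]) hha, hh0]
  set a := deriv h 0 with ha
  have hfactor : deriv f 0 + deriv g 0 = deriv f 0 * (1 + a) := by
    rw [hgderiv]; ring
  have hF : deriv f 0 ≠ 0 := by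
    intro hc; apply hne; rw [hfactor, hc, zero_mul]
  have h1a : (1 : ℂ) + a ≠ 0 := by
    intro hc; apply hne; rw [hfactor, hc, mul_zero]
  have hq0 : (deriv f 0 - deriv g 0) / (deriv f 0 + deriv g 0) = (1 - a) / (1 + a) := by
    have hnum : deriv f 0 - deriv g 0 = deriv f 0 * (1 - a) := by rw [hgderiv]; ring
    rw [hnum, hfactor, mul_div_mul_left _ _ hF]
  set w := dslope h 0 with hw
  have hwd : DifferentiableOn ℂ w (Metric.ball (0:ℂ) 1) :=
    (differentiableOn_dslope hnhds).mpr hh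
  have hw0 : w 0 = a := dslope_same h 0
  have hwle : ∀ z ∈ Metric.ball (0:ℂ) 1, ‖w z‖ ≤ 1 := by
    intro z hz
    have := Complex.norm_dslope_le_div_of_mapsTo_ball hh (by rw [hh0]; exact hhm.mono_right ball_subset_closedBall) hz
    simpa using this
  have hzw : ∀ z ∈ Metric.ball (0:ℂ) 1, h z = z * w z := by
    intro z hz
    rcases eq_or_ne z 0 with rfl | hz0
    · simp [hh0]
    · rw [hw, dslope_of_ne h hz0, slope_def_field, hh0]
      field_simp
      ring
  have hawle : ‖a‖ ≤ 1 := by rw [← hw0]; exact hwle 0 h0D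
  -- part 1
  have part1 : 0 ≤ ((deriv f 0 - deriv g 0) / (deriv f 0 + deriv g 0)).re := by
    rw [hq0]
    apply aux_le _ 1 one_pos
    have e1 : (1 - a) / (1 + a) - (1:ℝ) = (-2 * a) / (1 + a) := by
      push_cast; field_simp; ring
    have e2 : (1 - a) / (1 + a) + (1:ℝ) = 2 / (1 + a) := by
      push_cast; field_simp; ring
    rw [e1, e2, norm_div, norm_div,
      div_le_div_iff_of_pos_right (norm_pos_iff.mpr h1a), norm_mul]
    have hm2 : ‖(-2 : ℂ)‖ = 2 := by norm_num
    have hp2 : ‖(2:ℂ)‖ = 2 := by norm_num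
    rw [hm2, hp2]
    nlinarith [norm_nonneg a]
  refine ⟨part1, ?_⟩
  -- case split : strict bound or rotation
  by_cases hcase : ∀ z ∈ Metric.ball (0:ℂ) 1, ‖w z‖ < 1
  · -- main case
    have hwne : ∀ z ∈ Metric.ball (0:ℂ) 1, (1:ℂ) + w z ≠ 0 := by
      intro z hz hc
      have hm1 : w z = -1 := by linear_combination hc
      have h1 := hcase z hz
      rw [hm1] at h1
      simp at h1
    set Q : ℂ → ℂ := fun z => (1 - w z) / (1 + w z) with hQ
    have hQd : DifferentiableOn ℂ Q (Metric.ball (0:ℂ) 1) :=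
      ((differentiableOn_const _).sub hwd).div ((differentiableOn_const _).add hwd) hwne
    have hQre : ∀ z ∈ Metric.ball (0:ℂ) 1, 0 < (Q z).re := by
      intro z hz
      rw [← aux_lt (Q z) 1 one_pos]
      have e1 : Q z - (1:ℝ) = (-2 * w z) / (1 + w z) := by
        rw [hQ]; push_cast; field_simp [hwne z hz]; ring
      have e2 : Q z + (1:ℝ) = 2 / (1 + w z) := by
        rw [hQ]; push_cast; field_simp [hwne z hz]; ring
      rw [e1, e2, norm_div, norm_div,
        div_lt_div_iff_of_pos_right (norm_pos_iff.mpr (hwne z hz))]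
      have hn2 : ‖-2 * w z‖ = 2 * ‖w z‖ := by
        rw [norm_mul]; norm_num
      have h2 : ‖(2:ℂ)‖ = 2 := by norm_num
      rw [hn2, h2]
      linarith [hcase z hz]
    have hαpos : 0 < (Q 0).re := hQre 0 h0D
    set α := (Q 0).re with hα
    set β := (Q 0).im with hβ
    set p : ℂ → ℂ := fun z => Q z - (β:ℂ) * I with hp
    have hpre : ∀ z, (p z).re = (Q z).re := by intro z; simp [hp]
    have hp0 : p 0 = (α : ℂ) := by
      apply Complex.ext <;> simp [hp, hα, hβ]
    have hpden : ∀ z ∈ Metric.ball (0:ℂ) 1, p z + (α:ℂ) ≠ 0 := by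
      intro z hz hc
      have hc' := congrArg Complex.re hc
      simp only [Complex.add_re, Complex.ofReal_re, Complex.zero_re, hpre z] at hc'
      linarith [hQre z hz, hαpos]
    set r : ℂ → ℂ := fun z => (p z - (α:ℂ)) / (p z + (α:ℂ)) with hr
    have hpd : DifferentiableOn ℂ p (Metric.ball (0:ℂ) 1) :=
      hQd.sub (differentiableOn_const _)
    have hrd : DifferentiableOn ℂ r (Metric.ball (0:ℂ) 1) :=
      (hpd.sub (differentiableOn_const _)).div (hpd.add (differentiableOn_const _)) hpden
    have hrm : Set.MapsTo r (Metric.ball (0:ℂ) 1) (Metric.ball (0:ℂ) 1) := by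
      intro z hz
      rw [mem_ball_zero_iff, hr]
      simp only
      rw [norm_div, div_lt_one (norm_pos_iff.mpr (hpden z hz))]
      exact (aux_lt (p z) α hαpos).mpr (by rw [hpre]; exact hQre z hz)
    have hr0 : r 0 = 0 := by
      rw [hr]; simp only [hp0, sub_self, zero_div]
    intro z hz
    have hazlt : ‖z‖ < 1 := by
      rw [← mem_ball_zero_iff]; exact hz
    have key : ‖r z‖ ≤ ‖z‖ :=
      Complex.norm_le_norm_of_mapsTo_ball hrd (hrm.mono_right ball_subset_closedBall) hr0 hazlt
    have h1 : ‖(p z - (α:ℂ))‖ ≤ ‖z‖ * ‖(p z + (α:ℂ))‖ := by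
      rw [hr] at key
      simp only at key
      rwa [norm_div, div_le_iff₀ (norm_pos_iff.mpr (hpden z hz))] at key
    have habsα : ‖((α:ℂ))‖ = α := by
      rw [Complex.norm_real, Real.norm_eq_abs, abs_of_pos hαpos]
    have l1 : ‖p z‖ - α ≤ ‖(p z - (α:ℂ))‖ := by
      have := norm_add_le (p z - (α:ℂ)) ((α:ℂ))
      simp only [sub_add_cancel, habsα] at this
      linarith
    have l2 : ‖(p z + (α:ℂ))‖ ≤ ‖p z‖ + α := by
      have := norm_add_le (p z) ((α:ℂ))
      rwa [habsα] at this
    have h2 : ‖p z‖ ≤ α * (1 + ‖z‖) / (1 - ‖z‖) := by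
      rw [le_div_iff₀ (by linarith)]
      nlinarith [norm_nonneg (p z), norm_nonneg z]
    have h3 : ‖Q z‖ ≤ ‖p z‖ + |β| := by
      have hqp : Q z = p z + (β:ℂ) * I := by rw [hp]; ring
      rw [hqp]
      have := norm_add_le (p z) ((β:ℂ) * I)
      simpa [Complex.norm_real] using this
    have h1Q : (1:ℂ) + Q z ≠ 0 := by
      intro hc
      have hc' := congrArg Complex.re hc
      simp only [Complex.add_re, Complex.one_re, Complex.zero_re] at hc'
      linarith [hQre z hz]
    have e4 : (1 - w z) * (1 + Q z) = 2 * Q z := by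
      rw [hQ]; simp only; field_simp [hwne z hz]; ring
    have habsQ1 : 1 ≤ ‖1 + Q z‖ := by
      have hle := Complex.re_le_norm (1 + Q z)
      have h5 : (1 + Q z).re = 1 + (Q z).re := by simp
      linarith [hQre z hz]
    have e5 : ‖1 - w z‖ ≤ 2 * ‖Q z‖ := by
      have habs := congrArg norm e4
      rw [norm_mul, norm_mul] at habs
      have h2' : ‖(2:ℂ)‖ = 2 := by norm_num
      rw [h2'] at habs
      nlinarith [norm_nonneg (1 - w z), norm_nonneg (Q z)]
    have hq0Q : (deriv f 0 - deriv g 0) / (deriv f 0 + deriv g 0) = Q 0 := by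
      rw [hq0, hQ]; simp only [hw0]
    rw [hq0Q, ← hα, ← hβ]
    have hfz : z - h z = z * (1 - w z) := by rw [hzw z hz]; ring
    rw [hfz, norm_mul]
    have chain : ‖1 - w z‖ ≤
        2 * (α * (1 + ‖z‖) / (1 - ‖z‖) + |β|) := by
      linarith
    calc ‖z‖ * ‖1 - w z‖
        ≤ ‖z‖ * (2 * (α * (1 + ‖z‖) / (1 - ‖z‖) + |β|)) :=
          mul_le_mul_of_nonneg_left chain (norm_nonneg z)
      _ = 2 * ‖z‖ * (α * (1 + ‖z‖) / (1 - ‖z‖) + |β|) := by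
          ring
  · -- degenerate case: w is a constant of modulus one
    push_neg at hcase
    obtain ⟨z₀, hz₀, hz₀1⟩ := hcase
    have habs1 : ‖w z₀‖ = 1 := le_antisymm (hwle z₀ hz₀) hz₀1
    have hmax : IsMaxOn (norm ∘ w) (Metric.ball (0:ℂ) 1) z₀ := by
      intro x hx
      simp only [Function.comp_apply, habs1]
      exact hwle x hx
    have hconst := Complex.eqOn_of_isPreconnected_of_isMaxOn_norm
      (convex_ball (0:ℂ) 1).isPreconnected Metric.isOpen_ball hwd hz₀ hmax
    have hwz0 : w z₀ = a := by
      have := hconst h0D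
      simp only [Function.const_apply] at this
      rw [hw0] at this
      exact this.symm
    have haabs : ‖a‖ = 1 := by rw [← hwz0]; exact habs1
    have hwa : ∀ z ∈ Metric.ball (0:ℂ) 1, w z = a := by
      intro z hz
      have := hconst hz
      simp only [Function.const_apply] at this
      rw [this, hwz0]
    have hre0 : ((deriv f 0 - deriv g 0) / (deriv f 0 + deriv g 0)).re = 0 := by
      rw [hq0]
      apply aux_eq _ 1 one_pos
      have e1 : (1 - a) / (1 + a) - (1:ℝ) = (-2 * a) / (1 + a) := by
        push_cast; field_simp; ring
      have e2 : (1 - a) / (1 + a) + (1:ℝ) = 2 / (1 + a) := by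
        push_cast; field_simp; ring
      rw [e1, e2, norm_div, norm_div]
      congr 1
      rw [norm_mul, haabs]
      norm_num
    intro z hz
    have hazlt : ‖z‖ < 1 := by
      rw [← mem_ball_zero_iff]; exact hz
    rw [hre0, zero_mul, zero_div, zero_add]
    set q0 := (deriv f 0 - deriv g 0) / (deriv f 0 + deriv g 0) with hq0def
    have habsq0 : ‖q0‖ = |q0.im| := by
      rw [Complex.norm_def, Complex.normSq_apply]
      rw [show q0.re = 0 from hre0]
      simp [Real.sqrt_mul_self_eq_abs]
    have h1ma : (1:ℂ) - a = q0 * (1 + a) := by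
      rw [hq0, div_mul_cancel₀ _ h1a]
    have h1pa : ‖1 + a‖ ≤ 2 := by
      calc ‖1 + a‖ ≤ ‖(1:ℂ)‖ + ‖a‖ := norm_add_le _ _
        _ = 2 := by rw [haabs]; norm_num
    have h1maabs : ‖1 - a‖ ≤ 2 * |q0.im| := by
      rw [h1ma, norm_mul, habsq0]
      nlinarith [abs_nonneg q0.im, norm_nonneg ((1:ℂ) + a)]
    have hfz : z - h z = z * (1 - a) := by rw [hzw z hz, hwa z hz]; ring
    rw [hfz, norm_mul]
    calc ‖z‖ * ‖1 - a‖
        ≤ ‖z‖ * (2 * |q0.im|) :=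
          mul_le_mul_of_nonneg_left h1maabs (norm_nonneg z)
      _ = 2 * ‖z‖ * |q0.im| := by ring
end

section
/- Let f, g : 𝔻 → ℂ be univalent with f(0) = g(0) = 0, f'(0), g'(0) > 0, and suppose g(𝔻) ⊆ f(𝔻) with g = f ∘ h for a holomorphic h : 𝔻 → 𝔻 with h(0) = 0 and h'(0) > 0 (so g'(0) ≤ f'(0) ≤ 1 assuming f, g map into 𝔻). Then |f(z) − g(z)| ≤ (8|z|/(1−|z|)^4)·(1/g'(0) − 1/f'(0)) for all z ∈ 𝔻. -/
open Metric Set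

private lemma aux_deriv_bound (f : ℂ → ℂ)
    (hf : DifferentiableOn ℂ f (Metric.ball 0 1))
    (hfm : Set.MapsTo f (Metric.ball 0 1) (Metric.ball 0 1))
    {u : ℂ} (hu : u ∈ Metric.ball (0:ℂ) 1) :
    ‖deriv f u‖ ≤ 2 / (1 - ‖u‖) := by
  have hu1 : ‖u‖ < 1 := by simpa using hu
  have hpos : 0 < 1 - ‖u‖ := by linarith
  have hsub : Metric.ball u (1 - ‖u‖) ⊆ Metric.ball (0:ℂ) 1 :=
    Metric.ball_subset_ball' (by rw [dist_zero_right]; linarith)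
  have hmaps : Set.MapsTo f (Metric.ball u (1 - ‖u‖)) (Metric.ball (f u) 2) := by
    intro w hw
    have hw1 : ‖f w‖ < 1 := by simpa using hfm (hsub hw)
    have hw2 : ‖f u‖ < 1 := by simpa using hfm hu
    have : dist (f w) (f u) < 2 :=
      lt_of_le_of_lt (dist_le_norm_add_norm _ _) (by linarith)
    simpa [Metric.mem_ball] using this
  exact Complex.norm_deriv_le_div_of_mapsTo_ball (hf.mono hsub) (hmaps.mono_right ball_subset_closedBall) hpos

set_option maxHeartbeats 1000000 in
theorem stmt_12 (f g h : ℂ → ℂ)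
    (hf : DifferentiableOn ℂ f (Metric.ball 0 1))
    (hg : DifferentiableOn ℂ g (Metric.ball 0 1))
    (hh : DifferentiableOn ℂ h (Metric.ball 0 1))
    (hfi : Set.InjOn f (Metric.ball 0 1)) (hgi : Set.InjOn g (Metric.ball 0 1))
    (hfm : Set.MapsTo f (Metric.ball 0 1) (Metric.ball 0 1))
    (hgm : Set.MapsTo g (Metric.ball 0 1) (Metric.ball 0 1))
    (hhm : Set.MapsTo h (Metric.ball 0 1) (Metric.ball 0 1))
    (hf0 : f 0 = 0) (hg0 : g 0 = 0) (hh0 : h 0 = 0)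
    (hrange : g '' (Metric.ball 0 1) ⊆ f '' (Metric.ball 0 1))
    (hf' : (deriv f 0).im = 0 ∧ 0 < (deriv f 0).re)
    (hg' : (deriv g 0).im = 0 ∧ 0 < (deriv g 0).re)
    (hh' : (deriv h 0).im = 0 ∧ 0 < (deriv h 0).re)
    (hsub : ∀ z ∈ Metric.ball (0 : ℂ) 1, g z = f (h z)) :
    ∀ z ∈ Metric.ball (0 : ℂ) 1,
      ‖f z - g z‖ ≤
        8 * ‖z‖ / (1 - ‖z‖) ^ 4 *
          (1 / (deriv g 0).re - 1 / (deriv f 0).re) := by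
  intro z hz
  have hz1 : ‖z‖ < 1 := by simpa using hz
  set r : ℝ := ‖z‖ with hr
  have hr0 : 0 ≤ r := norm_nonneg z
  have hrpos : 0 < 1 - r := by linarith
  have h0mem : (0:ℂ) ∈ Metric.ball (0:ℂ) 1 := by simp
  -- chain rule at 0
  have hgf : g =ᶠ[nhds (0:ℂ)] (f ∘ h) :=
    Filter.eventuallyEq_of_mem (Metric.isOpen_ball.mem_nhds h0mem) fun w hw => hsub w hw
  have hhd0 : DifferentiableAt ℂ h 0 := hh.differentiableAt (Metric.isOpen_ball.mem_nhds h0mem)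
  have hfd0 : DifferentiableAt ℂ f 0 := hf.differentiableAt (Metric.isOpen_ball.mem_nhds h0mem)
  have hchain : deriv g 0 = deriv f 0 * deriv h 0 := by
    rw [hgf.deriv_eq]
    have := deriv_comp 0 (by simpa [hh0] using hfd0) hhd0
    simpa [hh0] using this
  set a : ℝ := (deriv g 0).re with ha
  set b : ℝ := (deriv f 0).re with hb
  set τ : ℝ := (deriv h 0).re with hτ
  have ha0 : 0 < a := hg'.2
  have hb0 : 0 < b := hf'.2
  have hτ0 : 0 < τ := hh'.2
  have hab : a = b * τ := by
    have := congrArg Complex.re hchain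
    simpa [Complex.mul_re, hf'.1, hh'.1] using this
  have ha1 : a ≤ 1 := by
    have h1 : ‖deriv g 0‖ ≤ 1 :=
      Complex.norm_deriv_le_one_of_mapsTo_ball hg (by rw [hg0]; exact hgm.mono_right ball_subset_closedBall) one_pos
    exact le_trans (Complex.re_le_norm _) h1
  have hτ1 : τ ≤ 1 := by
    have h1 : ‖deriv h 0‖ ≤ 1 :=
      Complex.norm_deriv_le_one_of_mapsTo_ball hh (by rw [hh0]; exact hhm.mono_right ball_subset_closedBall) one_pos
    exact le_trans (Complex.re_le_norm _) h1
  have hgap : 1 - τ ≤ 1 / a - 1 / b := by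
    have key : 1 / a - 1 / b = (1 - τ) / a := by
      rw [hab]; field_simp
    rw [key, le_div_iff₀ ha0]
    nlinarith
  have hcoef : 0 ≤ 8 * r / (1 - r) ^ 4 := by positivity
  -- Schwarz machinery
  have hmaps' : Set.MapsTo h (Metric.ball 0 1) (Metric.ball (h 0) 1) := by rwa [hh0]
  have hqle : ∀ w ∈ Metric.ball (0:ℂ) 1, ‖dslope h 0 w‖ ≤ 1 := fun w hw => by
    simpa using Complex.norm_dslope_le_div_of_mapsTo_ball hh (hmaps'.mono_right ball_subset_closedBall) hw
  have hzqz : ∀ w : ℂ, h w = w * dslope h 0 w := fun w => by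
    have := sub_smul_dslope h 0 w
    simp only [sub_zero, smul_eq_mul, hh0] at this
    exact this.symm
  by_cases hcase : ∃ w ∈ Metric.ball (0:ℂ) 1, ‖dslope h 0 w‖ = 1
  · -- equality case of Schwarz: h is the identity
    obtain ⟨w0, hw0, heq⟩ := hcase
    have haff := Complex.affine_of_mapsTo_ball_of_exists_norm_dslope_eq_div hh (hmaps'.mono_right ball_subset_closedBall) hw0
      (by simpa using heq)
    set C : ℂ := dslope h 0 w0 with hCdef
    have hC : deriv h 0 = C := by
      have hev : h =ᶠ[nhds (0:ℂ)] (fun w => h 0 + (w - 0) • C) :=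
        Filter.eventuallyEq_of_mem (Metric.isOpen_ball.mem_nhds h0mem) fun w hw => haff hw
      rw [hev.deriv_eq]
      have : deriv (fun w : ℂ => h 0 + (w - 0) * C) 0 = C := by
        simp [deriv_add_const', deriv_sub_const]
      simpa [smul_eq_mul] using this
    have hC1 : C = 1 := by
      have h1 : ‖C‖ = 1 := heq
      have h2 : C.im = 0 := by rw [← hC]; exact hh'.1
      have h3 : 0 < C.re := by rw [← hC]; exact hh'.2
      have h4 : C = ((C.re : ℝ) : ℂ) := by apply Complex.ext <;> simp [h2]
      have h5 : |C.re| = 1 := by rw [h4] at h1; simpa using h1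
      rw [abs_of_pos h3] at h5
      rw [h4, h5]; norm_num
    have hhz : h z = z := by
      have := haff hz
      simp [hC1, hh0] at this
      simpa using this
    have hτeq : τ = 1 := by rw [hτ, hC, hC1]; simp
    have hab' : a = b := by rw [hab, hτeq, mul_one]
    rw [hsub z hz, hhz, sub_self, norm_zero, hab', sub_self, mul_zero]
  · -- strict case
    push_neg at hcase
    have hqlt : ∀ w ∈ Metric.ball (0:ℂ) 1, ‖dslope h 0 w‖ < 1 := fun w hw =>
      lt_of_le_of_ne (hqle w hw) (hcase w hw)
    have htc : deriv h 0 = (τ:ℂ) := by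
      apply Complex.ext <;> simp [hh'.1, hτ]
    set q : ℂ → ℂ := dslope h 0 with hq
    have hqdiff : DifferentiableOn ℂ q (Metric.ball 0 1) :=
      (Complex.differentiableOn_dslope (Metric.isOpen_ball.mem_nhds h0mem)).mpr hh
    have hq0 : q 0 = (τ:ℂ) := by rw [hq, dslope_same, htc]
    set Q : ℂ → ℂ := fun w => ((τ:ℂ) - q w) / (1 - (τ:ℂ) * q w) with hQ
    have hnt : ‖(τ:ℂ)‖ = τ := by
      simp [Complex.norm_real, abs_of_pos hτ0]
    have hden : ∀ w ∈ Metric.ball (0:ℂ) 1, (1:ℂ) - (τ:ℂ) * q w ≠ 0 := by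
      intro w hw
      have h1 : ‖(τ:ℂ) * q w‖ < 1 := by
        rw [norm_mul, hnt]
        have := hqlt w hw
        nlinarith [norm_nonneg (q w)]
      intro hcon
      have : (τ:ℂ) * q w = 1 := by linear_combination -hcon
      rw [this] at h1; simp at h1
    have hQdiff : DifferentiableOn ℂ Q (Metric.ball 0 1) :=
      DifferentiableOn.div ((differentiableOn_const _).sub hqdiff)
        ((differentiableOn_const _).sub ((differentiableOn_const _).mul hqdiff)) hden
    have hQ0 : Q 0 = 0 := by rw [hQ]; simp [hq0]
    have hQmaps : Set.MapsTo Q (Metric.ball 0 1) (Metric.ball 0 1) := by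
      intro w hw
      have hu : ‖q w‖ < 1 := hqlt w hw
      rw [Metric.mem_ball, dist_zero_right, hQ]
      have hd := hden w hw
      have hdp : 0 < ‖(1:ℂ) - (τ:ℂ) * q w‖ := norm_pos_iff.mpr hd
      rw [norm_div, div_lt_one hdp]
      have e1 : ‖(τ:ℂ) - q w‖ ^ 2 = (τ - (q w).re) ^ 2 + (0 - (q w).im) ^ 2 := by
        rw [Complex.sq_norm, Complex.normSq_apply]
        simp only [Complex.sub_re, Complex.sub_im, Complex.ofReal_re, Complex.ofReal_im]
        ring
      have e2 : ‖(1:ℂ) - (τ:ℂ) * q w‖ ^ 2 =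
          (1 - τ * (q w).re) ^ 2 + (0 - τ * (q w).im) ^ 2 := by
        rw [Complex.sq_norm, Complex.normSq_apply]
        simp only [Complex.sub_re, Complex.sub_im, Complex.mul_re, Complex.mul_im,
          Complex.one_re, Complex.one_im, Complex.ofReal_re, Complex.ofReal_im]
        ring
      have hu2 : (q w).re ^ 2 + (q w).im ^ 2 < 1 := by
        have habs : ‖q w‖ < 1 := by exact hu
        have hsq := Complex.sq_norm (q w)
        rw [Complex.normSq_apply] at hsq
        nlinarith [norm_nonneg (q w)]
      have hτlt : τ < 1 := by
        have h5 : ‖q 0‖ < 1 := hqlt 0 h0mem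
        rw [hq0, hnt] at h5
        exact h5
      have hXY : ‖(τ:ℂ) - q w‖ ^ 2 < ‖(1:ℂ) - (τ:ℂ) * q w‖ ^ 2 := by
        rw [e1, e2]
        nlinarith [hu2, hτ0, hτlt, mul_pos (show (0:ℝ) < 1 - τ ^ 2 by nlinarith)
          (show (0:ℝ) < 1 - (q w).re ^ 2 - (q w).im ^ 2 by nlinarith)]
      exact lt_of_pow_lt_pow_left₀ 2 (norm_nonneg _) hXY
    have hQz : ‖Q z‖ ≤ r := by
      have := Complex.norm_le_norm_of_mapsTo_ball hQdiff (hQmaps.mono_right ball_subset_closedBall) hQ0 hz1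
      simpa [hr] using this
    have hden2 : (1:ℂ) - (τ:ℂ) * Q z ≠ 0 := by
      have h1 : ‖(τ:ℂ) * Q z‖ < 1 := by
        rw [norm_mul, hnt]; nlinarith [norm_nonneg (Q z)]
      intro hcon
      have : (τ:ℂ) * Q z = 1 := by linear_combination -hcon
      rw [this] at h1; simp at h1
    have hQdefz : Q z * (1 - (τ:ℂ) * q z) = (τ:ℂ) - q z := by
      show ((τ:ℂ) - q z) / (1 - (τ:ℂ) * q z) * (1 - (τ:ℂ) * q z) = (τ:ℂ) - q z
      exact div_mul_cancel₀ _ (hden z hz)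
    have hsolve : q z * (1 - (τ:ℂ) * Q z) = (τ:ℂ) - Q z := by
      linear_combination hQdefz
    have h1q : (1:ℂ) - q z = ((1 - (τ:ℂ)) * (1 + Q z)) / (1 - (τ:ℂ) * Q z) := by
      rw [eq_div_iff hden2]; linear_combination -hsolve
    have hnorm1q : ‖(1:ℂ) - q z‖ ≤ (1 - τ) * (1 + r) / (1 - r) := by
      rw [h1q, norm_div, norm_mul]
      have e1 : ‖(1:ℂ) - (τ:ℂ)‖ = 1 - τ := by
        have ecast : ((1:ℂ) - (τ:ℂ)) = (((1 - τ : ℝ)):ℂ) := by push_cast; ring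
        rw [ecast, Complex.norm_real, Real.norm_eq_abs, abs_of_nonneg (by linarith : (0:ℝ) ≤ 1 - τ)]
      have e2 : ‖(1:ℂ) + Q z‖ ≤ 1 + r := by
        refine (norm_add_le _ _).trans ?_
        simp only [norm_one]
        linarith
      have e3 : 1 - r ≤ ‖(1:ℂ) - (τ:ℂ) * Q z‖ := by
        have h4 : ‖(τ:ℂ) * Q z‖ ≤ r := by
          rw [norm_mul, hnt]
          nlinarith [norm_nonneg (Q z)]
        have := norm_sub_norm_le (1:ℂ) ((τ:ℂ) * Q z)
        simp only [norm_one] at this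
        linarith
      rw [e1]
      refine div_le_div₀ (by nlinarith) ?_ hrpos e3
      exact mul_le_mul_of_nonneg_left e2 (by linarith)
    have hzh : ‖z - h z‖ ≤ r * ((1 - τ) * (1 + r) / (1 - r)) := by
      have hzq2 : z - h z = z * (1 - q z) := by
        linear_combination (hzqz z).symm
      rw [hzq2, norm_mul]
      have : ‖z‖ = r := rfl
      rw [this]
      exact mul_le_mul_of_nonneg_left hnorm1q hr0
    have hhzle : ‖h z‖ ≤ r := by
      rw [hzqz z, norm_mul]
      have h1 := hqle z hz
      have : ‖z‖ = r := rfl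
      nlinarith [norm_nonneg (q z), norm_nonneg z, this]
    have hMVT : ‖f z - f (h z)‖ ≤ 2 / (1 - r) * ‖z - h z‖ := by
      have hconv : Convex ℝ (Metric.closedBall (0:ℂ) r) := convex_closedBall _ _
      have hmem : ∀ x ∈ Metric.closedBall (0:ℂ) r, x ∈ Metric.ball (0:ℂ) 1 := by
        intro x hx
        rw [Metric.mem_closedBall, dist_zero_right] at hx
        rw [Metric.mem_ball, dist_zero_right]
        linarith
      refine hconv.norm_image_sub_le_of_norm_hasDerivWithin_le
        (f' := deriv f) (fun x hx => ?_) (fun x hx => ?_) ?_ ?_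
      · exact ((hf.differentiableAt
          (Metric.isOpen_ball.mem_nhds (hmem x hx))).hasDerivAt).hasDerivWithinAt
      · refine (aux_deriv_bound f hf hfm (hmem x hx)).trans ?_
        have hx' : ‖x‖ ≤ r := by
          rw [Metric.mem_closedBall, dist_zero_right] at hx; exact hx
        exact div_le_div_of_nonneg_left (by norm_num) hrpos (by linarith)
      · rw [Metric.mem_closedBall, dist_zero_right]; exact hhzle
      · rw [Metric.mem_closedBall, dist_zero_right]
    have hmain : ‖f z - f (h z)‖ ≤ 2 / (1 - r) * (r * ((1 - τ) * (1 + r) / (1 - r))) :=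
      hMVT.trans (mul_le_mul_of_nonneg_left hzh (by positivity))
    have hstep : 2 / (1 - r) * (r * ((1 - τ) * (1 + r) / (1 - r))) ≤
        8 * r / (1 - r) ^ 4 * (1 - τ) := by
      have e1 : 2 / (1 - r) * (r * ((1 - τ) * (1 + r) / (1 - r))) =
          2 * r * (1 - τ) * (1 + r) / (1 - r) ^ 2 := by
        field_simp
      have e2 : 8 * r / (1 - r) ^ 4 * (1 - τ) = 8 * r * (1 - τ) / (1 - r) ^ 4 := by ring
      rw [e1, e2, div_le_div_iff₀ (by positivity) (by positivity)]
      have hX : 0 ≤ r * (1 - τ) * (1 - r) ^ 2 :=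
        mul_nonneg (mul_nonneg hr0 (by linarith)) (sq_nonneg _)
      have hK : 2 * (1 + r) * (1 - r) ^ 2 ≤ 8 := by nlinarith [sq_nonneg (1 - r), sq_nonneg r]
      nlinarith [mul_le_mul_of_nonneg_right hK hX]
    calc ‖f z - g z‖ = ‖f z - f (h z)‖ := by
          rw [hsub z hz]
      _ ≤ 2 / (1 - r) * (r * ((1 - τ) * (1 + r) / (1 - r))) := hmain
      _ ≤ 8 * r / (1 - r) ^ 4 * (1 - τ) := hstep
      _ ≤ 8 * r / (1 - r) ^ 4 * (1 / a - 1 / b) := mul_le_mul_of_nonneg_left hgap hcoef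
end

section
/- Let (λ_{s,t})_{0≤s≤t} be a family of probability measures on the unit circle 𝕋 such that λ_{s,s} = δ_1 for all s, the map (s,t) ↦ λ_{s,t} is weakly continuous, and with mean m(s,t) = ∫_𝕋 ξ dλ_{s,t}(ξ) satisfying the multiplicativity m(s,u) = m(s,t)·m(t,u) for 0 ≤ s ≤ t ≤ u. Then m(s,t) ≠ 0 for all 0 ≤ s ≤ t. -/
open MeasureTheory Filter Topology

noncomputable def clampRe : BoundedContinuousFunction ℂ ℝ :=
  BoundedContinuousFunction.mkOfBound
    ⟨fun ξ => max (-1) (min 1 ξ.re), by fun_prop⟩ 2 (by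
      intro x y
      have hx : |max (-1) (min 1 x.re)| ≤ 1 := by
        rw [abs_le]; constructor
        · exact le_max_left _ _
        · exact max_le (by norm_num) (min_le_left _ _)
      have hy : |max (-1) (min 1 y.re)| ≤ 1 := by
        rw [abs_le]; constructor
        · exact le_max_left _ _
        · exact max_le (by norm_num) (min_le_left _ _)
      calc dist _ _ ≤ |max (-1) (min 1 x.re)| + |max (-1) (min 1 y.re)| := by
              rw [Real.dist_eq]; exact abs_sub _ _
        _ ≤ 2 := by linarith)

noncomputable def clampIm : BoundedContinuousFunction ℂ ℝ :=
  BoundedContinuousFunction.mkOfBound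
    ⟨fun ξ => max (-1) (min 1 ξ.im), by fun_prop⟩ 2 (by
      intro x y
      have hx : |max (-1) (min 1 x.im)| ≤ 1 := by
        rw [abs_le]; constructor
        · exact le_max_left _ _
        · exact max_le (by norm_num) (min_le_left _ _)
      have hy : |max (-1) (min 1 y.im)| ≤ 1 := by
        rw [abs_le]; constructor
        · exact le_max_left _ _
        · exact max_le (by norm_num) (min_le_left _ _)
      calc dist _ _ ≤ |max (-1) (min 1 x.im)| + |max (-1) (min 1 y.im)| := by
              rw [Real.dist_eq]; exact abs_sub _ _
        _ ≤ 2 := by linarith)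

theorem stmt_15 (μ : ℝ × ℝ → Measure ℂ)
    [∀ p, IsProbabilityMeasure (μ p)]
    (hcirc : ∀ p : ℝ × ℝ, 0 ≤ p.1 → p.1 ≤ p.2 → μ p (Metric.sphere (0 : ℂ) 1)ᶜ = 0)
    (hδ : ∀ s : ℝ, 0 ≤ s → μ (s, s) = Measure.dirac 1)
    (hcont : ∀ f : BoundedContinuousFunction ℂ ℝ,
      ContinuousOn (fun p : ℝ × ℝ => ∫ ξ, f ξ ∂(μ p)) {p : ℝ × ℝ | 0 ≤ p.1 ∧ p.1 ≤ p.2})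
    (hmul : ∀ s t u : ℝ, 0 ≤ s → s ≤ t → t ≤ u →
      (∫ ξ, ξ ∂(μ (s, u))) = (∫ ξ, ξ ∂(μ (s, t))) * (∫ ξ, ξ ∂(μ (t, u)))) :
    ∀ s t : ℝ, 0 ≤ s → s ≤ t → (∫ ξ, ξ ∂(μ (s, t))) ≠ 0 := by
  -- notation
  set m : ℝ × ℝ → ℂ := fun p => ∫ ξ, ξ ∂(μ p) with hm_def
  set S : Set (ℝ × ℝ) := {p : ℝ × ℝ | 0 ≤ p.1 ∧ p.1 ≤ p.2} with hS_def
  -- a.e. on the sphere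
  have hae : ∀ p ∈ S, ∀ᵐ ξ ∂(μ p), ‖ξ‖ = 1 := by
    intro p hp
    have := hcirc p hp.1 hp.2
    rw [ae_iff]
    refine measure_mono_null ?_ this
    intro ξ hξ
    simp only [Set.mem_setOf_eq] at hξ
    simp only [Set.mem_compl_iff, Metric.mem_sphere, dist_zero_right]
    exact hξ
  have hint : ∀ p ∈ S, Integrable (fun ξ : ℂ => ξ) (μ p) := by
    intro p hp
    refine ⟨measurable_id.aestronglyMeasurable, ?_⟩
    exact HasFiniteIntegral.of_bounded (C := 1) ((hae p hp).mono fun ξ h => h.le)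
  -- the mean is continuous on S
  have hmcont : ContinuousOn m S := by
    have key : ∀ p ∈ S, m p =
        ((∫ ξ, clampRe ξ ∂(μ p) : ℝ) : ℂ) + ((∫ ξ, clampIm ξ ∂(μ p) : ℝ) : ℂ) * Complex.I := by
      intro p hp
      have h1 : ∫ ξ, clampRe ξ ∂(μ p) = ∫ ξ, ξ.re ∂(μ p) := by
        refine integral_congr_ae ((hae p hp).mono fun ξ h => ?_)
        have h1 : |ξ.re| ≤ 1 := by
          have := Complex.abs_re_le_norm ξ
          rwa [h] at this
        rw [abs_le] at h1
        show max (-1) (min 1 ξ.re) = ξ.re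
        rw [min_eq_right h1.2, max_eq_right h1.1]
      have h2 : ∫ ξ, clampIm ξ ∂(μ p) = ∫ ξ, ξ.im ∂(μ p) := by
        refine integral_congr_ae ((hae p hp).mono fun ξ h => ?_)
        have h1 : |ξ.im| ≤ 1 := by
          have := Complex.abs_im_le_norm ξ
          rwa [h] at this
        rw [abs_le] at h1
        show max (-1) (min 1 ξ.im) = ξ.im
        rw [min_eq_right h1.2, max_eq_right h1.1]
      rw [h1, h2]
      exact (integral_re_add_im (hint p hp)).symm
    refine ContinuousOn.congr ?_ key
    exact ((Complex.continuous_ofReal.comp_continuousOn (hcont clampRe)).add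
      (((Complex.continuous_ofReal.comp_continuousOn (hcont clampIm))).mul
        continuousOn_const))
  -- m (s,s) = 1
  have hone : ∀ s : ℝ, 0 ≤ s → m (s, s) = 1 := by
    intro s hs
    simp only [hm_def, hδ s hs]
    exact integral_dirac (fun ξ : ℂ => ξ) 1
  -- main argument
  intro s t hs hst hzero
  set T : Set ℝ := {x ∈ Set.Icc s t | m (s, x) = 0} with hT_def
  have hTne : T.Nonempty := ⟨t, ⟨hst, le_refl t⟩, hzero⟩
  have hTbdd : BddBelow T := ⟨s, fun x hx => hx.1.1⟩
  have hmsc : ContinuousOn (fun x : ℝ => m (s, x)) (Set.Icc s t) := by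
    refine hmcont.comp (by fun_prop) ?_
    intro x hx
    exact ⟨hs, hx.1⟩
  have hTclosed : IsClosed T := by
    have h := hmsc.preimage_isClosed_of_isClosed isClosed_Icc (isClosed_singleton (x := (0:ℂ)))
    have he : T = Set.Icc s t ∩ (fun x : ℝ => m (s, x)) ⁻¹' {0} := by
      ext x; simp [hT_def]
    rw [he]; exact h
  set t₁ : ℝ := sInf T with ht₁_def
  have ht₁mem : t₁ ∈ T := hTclosed.csInf_mem hTne hTbdd
  have hst₁ : s ≤ t₁ := ht₁mem.1.1
  have ht₁t : t₁ ≤ t := ht₁mem.1.2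
  have hslt : s < t₁ := by
    rcases lt_or_eq_of_le hst₁ with h | h
    · exact h
    · exfalso
      have := ht₁mem.2
      rw [← h, hone s hs] at this
      exact one_ne_zero this
  -- for x in [s, t₁), m (x, t₁) = 0
  have hzero' : ∀ x ∈ Set.Ico s t₁, m (x, t₁) = 0 := by
    intro x hx
    have hx1 : s ≤ x := hx.1
    have hx2 : x ≤ t₁ := hx.2.le
    have this : m (s, t₁) = m (s, x) * m (x, t₁) := hmul s x t₁ hs hx1 hx2
    rw [ht₁mem.2] at this
    have hmsx : m (s, x) ≠ 0 := by
      intro h0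
      have hxT : x ∈ T := ⟨⟨hx1, hx2.trans ht₁t⟩, h0⟩
      exact absurd (csInf_le hTbdd hxT) (not_le.mpr hx.2)
    rcases mul_eq_zero.mp this.symm with h | h
    · exact absurd h hmsx
    · exact h
  -- continuity gives m (x, t₁) → m (t₁, t₁) = 1 as x → t₁⁻
  have ht₁S : (t₁, t₁) ∈ S := ⟨hs.trans hst₁, le_refl t₁⟩
  have htend : Tendsto (fun x : ℝ => m (x, t₁)) (𝓝[Set.Ico s t₁] t₁) (𝓝 (m (t₁, t₁))) := by
    have h1 : Tendsto (fun x : ℝ => ((x, t₁) : ℝ × ℝ)) (𝓝[Set.Ico s t₁] t₁)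
        (𝓝[S] (t₁, t₁)) := by
      apply tendsto_nhdsWithin_of_tendsto_nhds_of_eventually_within
      · exact (Continuous.tendsto (by fun_prop) t₁).mono_left nhdsWithin_le_nhds
      · filter_upwards [self_mem_nhdsWithin] with x hx
        exact ⟨hs.trans hx.1, hx.2.le⟩
    exact (hmcont (t₁, t₁) ht₁S).tendsto.comp h1
  have hnb : (𝓝[Set.Ico s t₁] t₁).NeBot := right_nhdsWithin_Ico_neBot hslt
  have htend0 : Tendsto (fun x : ℝ => m (x, t₁)) (𝓝[Set.Ico s t₁] t₁) (𝓝 (0 : ℂ)) := by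
    refine Tendsto.congr' ?_ tendsto_const_nhds
    filter_upwards [self_mem_nhdsWithin] with x hx
    exact (hzero' x hx).symm
  have : (0 : ℂ) = m (t₁, t₁) := tendsto_nhds_unique htend0 htend
  rw [hone t₁ (hs.trans hst₁)] at this
  exact one_ne_zero this.symm
end

section
/- Let Q : 𝔻 × B_b([0,∞)) → ℂ be such that for each bounded Borel set B, z ↦ Q(z, B) is holomorphic on 𝔻 with Re Q(z, B) ≥ 0, for each z ∈ 𝔻, Q(z, ·) is a locally finite complex measure, and Q(z, {t}) = 0 for all t. Then the assignment Φ(B) := Im Q(0, B) defines a locally finite signed measure on [0, ∞), and for each B, the measure Π₀(·, B) in the Herglotz representation Q(z, B) = iΦ(B) + ∫_𝕋 (1+ξz)/(1−ξz) Π₀(dξ, B) satisfies: for pairwise disjoint Borel sets B_1, B_2, ... ⊆ [0,T], Π₀(A, ∪_n B_n) = Σ_n Π₀(A, B_n) for every Borel A ⊆ 𝕋 (i.e., Π₀ is σ-additive in its second argument). -/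
open MeasureTheory Bornology Complex ENNReal

noncomputable def hergCoeff (P : Measure ℂ) : ℕ → ℂ :=
  fun n => if n = 0 then ((P Set.univ).toReal : ℂ) else 2 * ∫ ξ, ξ ^ n ∂P

lemma herg_sphere_ae (P : Measure ℂ) (h0 : P (Metric.sphere (0 : ℂ) 1)ᶜ = 0) :
    ∀ᵐ ξ ∂P, ‖ξ‖ = 1 := by
  have h : ∀ᵐ ξ ∂P, ξ ∈ Metric.sphere (0 : ℂ) 1 := by
    rw [MeasureTheory.ae_iff]; exact h0
  filter_upwards [h] with ξ hξ
  simpa using hξ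

lemma herg_moment_norm (P : Measure ℂ) [IsFiniteMeasure P]
    (h0 : P (Metric.sphere (0 : ℂ) 1)ᶜ = 0) (n : ℕ) :
    Integrable (fun ξ => ξ ^ n) P ∧ ‖∫ ξ, ξ ^ n ∂P‖ ≤ (P Set.univ).toReal := by
  have hb : ∀ᵐ ξ ∂P, ‖ξ ^ n‖ ≤ 1 := by
    filter_upwards [herg_sphere_ae P h0] with ξ hξ
    simp [norm_pow, hξ]
  have hint : Integrable (fun ξ => ξ ^ n) P :=
    Integrable.mono' (integrable_const 1)
      ((measurable_id.pow_const n).aestronglyMeasurable) hb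
  refine ⟨hint, ?_⟩
  calc ‖∫ ξ, ξ ^ n ∂P‖ ≤ 1 * (P Set.univ).toReal :=
        norm_integral_le_of_norm_le_const hb
  _ = (P Set.univ).toReal := one_mul _

lemma herg_coeff_norm (P : Measure ℂ) [IsFiniteMeasure P]
    (h0 : P (Metric.sphere (0 : ℂ) 1)ᶜ = 0) (n : ℕ) :
    ‖hergCoeff P n‖ ≤ 2 * (P Set.univ).toReal := by
  rcases eq_or_ne n 0 with h | h
  · simp only [hergCoeff, h, if_true]
    rw [Complex.norm_real, Real.norm_eq_abs, _root_.abs_of_nonneg ENNReal.toReal_nonneg]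
    nlinarith [ENNReal.toReal_nonneg (a := P Set.univ)]
  · simp only [hergCoeff, if_neg h]
    rw [norm_mul]
    have := (herg_moment_norm P h0 n).2
    have h2 : ‖(2:ℂ)‖ = 2 := by norm_num
    rw [h2]
    nlinarith [this, norm_nonneg (∫ ξ, ξ ^ n ∂P)]

lemma herg_radius (P : Measure ℂ) [IsFiniteMeasure P]
    (h0 : P (Metric.sphere (0 : ℂ) 1)ᶜ = 0) :
    (1 : ℝ≥0∞) ≤ (FormalMultilinearSeries.ofScalars ℂ (hergCoeff P)).radius := by
  have := FormalMultilinearSeries.le_radius_of_bound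
    (FormalMultilinearSeries.ofScalars ℂ (hergCoeff P)) (2 * (P Set.univ).toReal) (r := 1)
    (fun n => by
      rw [FormalMultilinearSeries.ofScalars_norm]
      simpa using herg_coeff_norm P h0 n)
  simpa using this

lemma herg_hasFPowerSeries (P : Measure ℂ) [IsFiniteMeasure P]
    (h0 : P (Metric.sphere (0 : ℂ) 1)ᶜ = 0) :
    HasFPowerSeriesOnBall (fun z => ∫ ξ, (1 + ξ * z) / (1 - ξ * z) ∂P)
      (FormalMultilinearSeries.ofScalars ℂ (hergCoeff P)) 0 1 := by
  refine ⟨herg_radius P h0, one_pos, ?_⟩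
  intro y hy
  have hy1 : ‖y‖ < 1 := by
    simpa [edist_eq_enorm_sub, ← ENNReal.coe_one, ENNReal.coe_lt_coe,
      ← NNReal.coe_lt_coe] using hy
  set F : ℕ → ℂ → ℂ := fun n ξ => (if n = 0 then 1 else 2 * ξ ^ n) * y ^ n with hF
  have hF_bound : ∀ n, ∀ᵐ ξ ∂P, ‖F n ξ‖ ≤ 2 * ‖y‖ ^ n := by
    intro n
    filter_upwards [herg_sphere_ae P h0] with ξ hξ
    rcases eq_or_ne n 0 with h | h
    · simp [hF, h]
    · simp only [hF, if_neg h, norm_mul, norm_pow, hξ, one_pow, mul_one]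
      have : ‖(2:ℂ)‖ = 2 := by norm_num
      rw [this]
  have hF_meas : ∀ n, AEStronglyMeasurable (F n) P := by
    intro n
    apply Measurable.aestronglyMeasurable
    rcases eq_or_ne n 0 with h | h
    · simp only [hF, h, reduceIte]
      exact measurable_const
    · simp only [hF, if_neg h]
      exact (measurable_const.mul (measurable_id.pow_const n)).mul measurable_const
  have hF_int : ∀ n, Integrable (F n) P := fun n =>
    Integrable.mono' (integrable_const (2 * ‖y‖ ^ n)) (hF_meas n) (hF_bound n)
  have hF_sum : Summable fun n => ∫ ξ, ‖F n ξ‖ ∂P := by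
    apply Summable.of_nonneg_of_le (fun n => integral_nonneg fun ξ => norm_nonneg _)
      (fun n => ?_) (Summable.mul_left (2 * (P Set.univ).toReal)
        (summable_geometric_of_lt_one (norm_nonneg y) hy1))
    calc ∫ ξ, ‖F n ξ‖ ∂P ≤ ∫ _, 2 * ‖y‖ ^ n ∂P :=
          integral_mono_ae (hF_int n).norm (integrable_const _) (hF_bound n)
    _ = (P Set.univ).toReal * (2 * ‖y‖ ^ n) := by simp [smul_eq_mul, measureReal_def]
    _ = 2 * (P Set.univ).toReal * ‖y‖ ^ n := by ring
  have key := hasSum_integral_of_summable_integral_norm hF_int hF_sum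
  have htsum : ∀ᵐ ξ ∂P, ∑' n, F n ξ = (1 + ξ * y) / (1 - ξ * y) := by
    filter_upwards [herg_sphere_ae P h0] with ξ hξ
    have hw : ‖ξ * y‖ < 1 := by
      rw [norm_mul, hξ, one_mul]; exact hy1
    have hne : 1 - ξ * y ≠ 0 := by
      intro h
      have : (1:ℂ) = ξ * y := by linear_combination h
      rw [← this] at hw; simp at hw
    have h1 : HasSum (fun n => 2 * (ξ * y) ^ n) (2 * (1 - ξ * y)⁻¹) :=
      (hasSum_geometric_of_norm_lt_one hw).mul_left 2
    have h2 : HasSum (fun n : ℕ => if n = 0 then (1:ℂ) else 0) 1 :=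
      hasSum_ite_eq (0 : ℕ) (1 : ℂ)
    have h3 : HasSum (fun n => F n ξ) (2 * (1 - ξ * y)⁻¹ - 1) := by
      convert h1.sub h2 using 1
      · rfl
      funext n
      rcases eq_or_ne n 0 with h | h
      · simp [hF, h]; norm_num
      · simp [hF, if_neg h, mul_pow]; ring
    rw [h3.tsum_eq]
    field_simp
    ring
  have hval : ∫ ξ, ∑' n, F n ξ ∂P = ∫ ξ, (1 + ξ * y) / (1 - ξ * y) ∂P :=
    integral_congr_ae htsum
  rw [hval] at key
  have hcoeff : ∀ n, ∫ ξ, F n ξ ∂P =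
      (FormalMultilinearSeries.ofScalars ℂ (hergCoeff P)) n fun _ => y := by
    intro n
    rw [FormalMultilinearSeries.ofScalars_apply_eq, smul_eq_mul]
    rcases eq_or_ne n 0 with h | h
    · simp [hF, h, hergCoeff, smul_eq_mul, measureReal_def]
    · simp only [hF, if_neg h, hergCoeff]
      rw [integral_mul_const, integral_const_mul]
  rw [zero_add]
  exact HasSum.congr_fun key fun n => (hcoeff n).symm

lemma cont_int' {X : Type*} [MeasurableSpace X] [TopologicalSpace X] [CompactSpace X]
    [OpensMeasurableSpace X] {E : Type*} [NormedAddCommGroup E] [SecondCountableTopology E] {g : X → E}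
    (hg : Continuous g) (P : Measure X) [IsFiniteMeasure P] :
    Integrable g P := by
  obtain ⟨C, hC⟩ := (isCompact_range hg.norm).bddAbove
  exact Integrable.mono' (integrable_const C) hg.aestronglyMeasurable
    (Filter.Eventually.of_forall fun x => hC ⟨x, rfl⟩)

lemma cont_int {X : Type*} [MeasurableSpace X] [TopologicalSpace X] [CompactSpace X]
    [OpensMeasurableSpace X] (g : C(X, ℂ)) (P : Measure X) [IsFiniteMeasure P] :
    Integrable g P :=
  cont_int' g.continuous P

lemma herg_ext (μ ν : Measure ℂ) [IsFiniteMeasure μ] [IsFiniteMeasure ν]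
    (hμ0 : μ (Metric.sphere (0:ℂ) 1)ᶜ = 0) (hν0 : ν (Metric.sphere (0:ℂ) 1)ᶜ = 0)
    (hmom : ∀ n : ℕ, ∫ ξ, ξ ^ n ∂μ = ∫ ξ, ξ ^ n ∂ν) : μ = ν := by
  set S : Set ℂ := Metric.sphere (0:ℂ) 1 with hS
  have hSm : MeasurableSet S := Metric.isClosed_sphere.measurableSet
  have hemb : MeasurableEmbedding ((↑) : S → ℂ) := MeasurableEmbedding.subtype_coe hSm
  have : CompactSpace S := isCompact_iff_compactSpace.mp (isCompact_sphere 0 1)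
  have hxnorm : ∀ x : S, ‖(x : ℂ)‖ = 1 := fun x => mem_sphere_zero_iff_norm.mp x.2
  have hxne : ∀ x : S, (x : ℂ) ≠ 0 := fun x => by
    intro h; have := hxnorm x; rw [h] at this; simp at this
  set μ' : Measure S := Measure.comap (↑) μ with hμ'
  set ν' : Measure S := Measure.comap (↑) ν with hν'
  have hmapμ : Measure.map (↑) μ' = μ := by
    rw [hμ', hemb.map_comap, Subtype.range_coe, Measure.restrict_eq_self_of_ae_mem]
    rw [MeasureTheory.ae_iff]; exact hμ0
  have hmapν : Measure.map (↑) ν' = ν := by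
    rw [hν', hemb.map_comap, Subtype.range_coe, Measure.restrict_eq_self_of_ae_mem]
    rw [MeasureTheory.ae_iff]; exact hν0
  have hμ'fin : IsFiniteMeasure μ' := by
    constructor; rw [hμ', hemb.comap_apply]; exact measure_lt_top μ _
  have hν'fin : IsFiniteMeasure ν' := by
    constructor; rw [hν', hemb.comap_apply]; exact measure_lt_top ν _
  -- natural moments on the subtype
  have hmomS : ∀ n : ℕ, ∫ x : S, (x : ℂ) ^ n ∂μ' = ∫ x : S, (x : ℂ) ^ n ∂ν' := by
    intro n
    have h1 := hemb.integral_map (μ := μ') (g := fun ξ : ℂ => ξ ^ n)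
    have h2 := hemb.integral_map (μ := ν') (g := fun ξ : ℂ => ξ ^ n)
    rw [hmapμ] at h1; rw [hmapν] at h2
    rw [← h1, ← h2]; exact hmom n
  -- conj on the sphere is inversion
  have hconj : ∀ x : S, (starRingEnd ℂ) (x : ℂ) = (x : ℂ)⁻¹ := by
    intro x
    have h1 : (x : ℂ) * (starRingEnd ℂ) (x : ℂ) = 1 := by
      rw [Complex.mul_conj]
      norm_cast
      rw [Complex.normSq_eq_norm_sq, hxnorm x]; norm_num
    exact (inv_eq_of_mul_eq_one_right h1).symm
  -- integer moments
  have hχcont : ∀ n : ℤ, Continuous fun x : S => (x : ℂ) ^ n := fun n =>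
    continuous_subtype_val.zpow₀ n fun x => Or.inl (hxne x)
  have hmomZ : ∀ n : ℤ, ∫ x : S, (x : ℂ) ^ n ∂μ' = ∫ x : S, (x : ℂ) ^ n ∂ν' := by
    intro n
    cases n with
    | ofNat m => simpa [zpow_natCast] using hmomS m
    | negSucc m =>
      have hpt : ∀ x : S, (x : ℂ) ^ (Int.negSucc m) = (starRingEnd ℂ) ((x : ℂ) ^ (m + 1)) := by
        intro x
        rw [zpow_negSucc, map_pow, hconj x, inv_pow]
      simp_rw [hpt]
      rw [integral_conj, integral_conj, hmomS (m + 1)]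
  -- Stone-Weierstrass setup
  set χ : ℤ → C(S, ℂ) := fun n => ⟨fun x => (x : ℂ) ^ n, hχcont n⟩ with hχ
  set W : Submodule ℂ C(S, ℂ) := Submodule.span ℂ (Set.range χ) with hW
  have hχmul : ∀ m n : ℤ, χ m * χ n = χ (m + n) := by
    intro m n; ext x
    exact (zpow_add₀ (hxne x) m n).symm
  have hχ0 : χ 0 = 1 := by ext x; exact zpow_zero _
  have h1W : (1 : C(S, ℂ)) ∈ W := hχ0 ▸ Submodule.subset_span ⟨0, rfl⟩
  have hmulW : ∀ (x y : C(S, ℂ)), x ∈ W → y ∈ W → x * y ∈ W := by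
    have hle : W * W ≤ W := by
      rw [hW, Submodule.span_mul_span]
      apply Submodule.span_le.2
      rintro f hf
      rw [Set.mem_mul] at hf
      obtain ⟨a, ⟨m, rfl⟩, b, ⟨n, rfl⟩, rfl⟩ := hf
      rw [hχmul]
      exact Submodule.subset_span ⟨m + n, rfl⟩
    exact fun x y hx hy => hle (Submodule.mul_mem_mul hx hy)
  have hχstar : ∀ n : ℤ, star (χ n) = χ (-n) := by
    intro n; ext x
    show (starRingEnd ℂ) ((x : ℂ) ^ n) = (x : ℂ) ^ (-n)
    rw [map_zpow₀, hconj x, inv_zpow, ← zpow_neg]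
  have hstarW : ∀ f ∈ W, star f ∈ W := by
    intro f hf
    refine Submodule.span_induction ?_ ?_ ?_ ?_ hf
    · rintro g ⟨n, rfl⟩
      rw [hχstar]
      exact Submodule.subset_span ⟨-n, rfl⟩
    · rw [star_zero]; exact Submodule.zero_mem W
    · intro a b _ _ ha hb; rw [star_add]; exact Submodule.add_mem W ha hb
    · intro c a _ ha; rw [star_smul]; exact Submodule.smul_mem W _ ha
  set A : StarSubalgebra ℂ C(S, ℂ) :=
    { toSubalgebra := W.toSubalgebra h1W hmulW
      star_mem' := fun hf => hstarW _ hf } with hA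
  have hAW : (A : Set C(S, ℂ)) = (W : Set C(S, ℂ)) := rfl
  have hsep : A.SeparatesPoints := by
    intro x y hxy
    refine ⟨_, ⟨χ 1, ?_, rfl⟩, ?_⟩
    · show χ 1 ∈ A
      exact Submodule.subset_span ⟨1, rfl⟩
    · show (x : ℂ) ^ (1:ℤ) ≠ (y : ℂ) ^ (1:ℤ)
      simpa [zpow_one] using fun h => hxy (Subtype.ext h)
  have hdense := ContinuousMap.starSubalgebra_topologicalClosure_eq_top_of_separatesPoints A hsep
  -- the functional g ↦ ∫ g dμ' - ∫ g dν'
  set L : C(S, ℂ) → ℂ := fun g => (∫ x, g x ∂μ') - (∫ x, g x ∂ν') with hL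
  have hLcont : Continuous L := by
    apply (LipschitzWith.of_dist_le_mul
      (K := (μ' Set.univ).toNNReal + (ν' Set.univ).toNNReal) ?_).continuous
    intro g h
    have hb : ∀ (P : Measure S), IsFiniteMeasure P →
        ‖(∫ x, g x ∂P) - ∫ x, h x ∂P‖ ≤ dist g h * (P Set.univ).toReal := by
      intro P hP
      rw [← integral_sub (cont_int g P) (cont_int h P)]
      apply norm_integral_le_of_norm_le_const
      apply Filter.Eventually.of_forall
      intro x
      rw [← dist_eq_norm]
      exact ContinuousMap.dist_apply_le_dist x
    rw [dist_eq_norm, hL]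
    have h1 := hb μ' hμ'fin
    have h2 := hb ν' hν'fin
    have hexp : ((((μ' Set.univ).toNNReal + (ν' Set.univ).toNNReal) : NNReal) : ℝ)
        = (μ' Set.univ).toReal + (ν' Set.univ).toReal := by
      simp [ENNReal.toReal]
    calc ‖(∫ x, g x ∂μ' - ∫ x, g x ∂ν') - (∫ x, h x ∂μ' - ∫ x, h x ∂ν')‖
        = ‖((∫ x, g x ∂μ') - ∫ x, h x ∂μ') - ((∫ x, g x ∂ν') - ∫ x, h x ∂ν')‖ := by
          ring_nf
      _ ≤ ‖(∫ x, g x ∂μ') - ∫ x, h x ∂μ'‖ + ‖(∫ x, g x ∂ν') - ∫ x, h x ∂ν'‖ :=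
          norm_sub_le _ _
      _ ≤ dist g h * (μ' Set.univ).toReal + dist g h * (ν' Set.univ).toReal := by
          gcongr
      _ = ((((μ' Set.univ).toNNReal + (ν' Set.univ).toNNReal) : NNReal) : ℝ) * dist g h := by
          rw [hexp]; ring
  have hW0 : ∀ g ∈ W, L g = 0 := by
    intro g hg
    refine Submodule.span_induction ?_ ?_ ?_ ?_ hg
    · rintro f ⟨n, rfl⟩
      show (∫ x, χ n x ∂μ') - (∫ x, χ n x ∂ν') = 0
      have : ∀ x : S, χ n x = (x : ℂ) ^ n := fun x => rfl
      simp_rw [this]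
      rw [hmomZ n, sub_self]
    · show (∫ x, (0 : C(S,ℂ)) x ∂μ') - (∫ x, (0 : C(S,ℂ)) x ∂ν') = 0
      simp
    · intro a b _ _ ha hb
      show (∫ x, (a + b) x ∂μ') - (∫ x, (a + b) x ∂ν') = 0
      simp only [ContinuousMap.add_apply]
      rw [integral_add (cont_int a μ') (cont_int b μ'),
        integral_add (cont_int a ν') (cont_int b ν')]
      have ha' : (∫ x, a x ∂μ') - (∫ x, a x ∂ν') = 0 := ha
      have hb' : (∫ x, b x ∂μ') - (∫ x, b x ∂ν') = 0 := hb
      linear_combination ha' + hb'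
    · intro c a _ ha
      show (∫ x, (c • a) x ∂μ') - (∫ x, (c • a) x ∂ν') = 0
      simp only [ContinuousMap.smul_apply]
      rw [integral_smul, integral_smul]
      have ha' : (∫ x, a x ∂μ') - (∫ x, a x ∂ν') = 0 := ha
      rw [smul_eq_mul, smul_eq_mul]
      linear_combination c * ha'
  have hall : ∀ g : C(S, ℂ), ∫ x, g x ∂μ' = ∫ x, g x ∂ν' := by
    intro g
    have hgmem : g ∈ closure (W : Set C(S, ℂ)) := by
      have h1 : g ∈ A.topologicalClosure := by rw [hdense]; trivial
      exact h1
    have hclosed : IsClosed {g : C(S, ℂ) | L g = 0} :=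
      IsClosed.preimage hLcont isClosed_singleton
    have := closure_minimal (fun f hf => hW0 f hf) hclosed hgmem
    have hLg : L g = 0 := this
    rw [hL] at hLg
    linear_combination hLg
  -- conclude equality of measures via lintegrals of bounded continuous ℝ≥0 functions
  have hlin : ∀ f : BoundedContinuousFunction S NNReal, ∫⁻ x, f x ∂μ' = ∫⁻ x, f x ∂ν' := by
    intro f
    have hcont : Continuous fun x : S => ((f x : ℝ) : ℂ) :=
      Complex.continuous_ofReal.comp (NNReal.continuous_coe.comp f.continuous)
    have hrint : ∀ (P : Measure S), IsFiniteMeasure P →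
        Integrable (fun x => (f x : ℝ)) P := fun P hP =>
      cont_int' (NNReal.continuous_coe.comp f.continuous) P
    have hg := hall ⟨fun x => ((f x : ℝ) : ℂ), hcont⟩
    simp only [ContinuousMap.coe_mk] at hg
    have hreal : ∫ x, (f x : ℝ) ∂μ' = ∫ x, (f x : ℝ) ∂ν' := by
      have h1 := Complex.ofRealCLM.integral_comp_comm (hrint μ' hμ'fin)
      have h2 := Complex.ofRealCLM.integral_comp_comm (hrint ν' hν'fin)
      simp only [Complex.ofRealCLM_apply] at h1 h2
      rw [h1, h2] at hg
      exact_mod_cast hg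
    rw [lintegral_coe_eq_integral _ (hrint μ' hμ'fin),
      lintegral_coe_eq_integral _ (hrint ν' hν'fin), hreal]
  have hμν' : μ' = ν' := @ext_of_forall_lintegral_eq_of_IsFiniteMeasure S _ _ _ _ μ' ν' hμ'fin hlin
  rw [← hmapμ, ← hmapν, hμν']

lemma herg_unique (μ ν : Measure ℂ) [IsFiniteMeasure μ] [IsFiniteMeasure ν]
    (hμ0 : μ (Metric.sphere (0:ℂ) 1)ᶜ = 0) (hν0 : ν (Metric.sphere (0:ℂ) 1)ᶜ = 0)
    (h : ∀ z ∈ Metric.ball (0:ℂ) 1,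
      ∫ ξ, (1 + ξ * z) / (1 - ξ * z) ∂μ = ∫ ξ, (1 + ξ * z) / (1 - ξ * z) ∂ν) :
    μ = ν := by
  have hμs := (herg_hasFPowerSeries μ hμ0).hasFPowerSeriesAt
  have hνs := (herg_hasFPowerSeries ν hν0).hasFPowerSeriesAt
  have heq : ∀ᶠ z in nhds (0:ℂ),
      (fun z => ∫ ξ, (1 + ξ * z) / (1 - ξ * z) ∂μ) z
        = (fun z => ∫ ξ, (1 + ξ * z) / (1 - ξ * z) ∂ν) z := by
    filter_upwards [Metric.ball_mem_nhds (0:ℂ) one_pos] with z hz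
    exact h z hz
  have hpq := hμs.eq_formalMultilinearSeries_of_eventually hνs heq
  have hc : hergCoeff μ = hergCoeff ν :=
    FormalMultilinearSeries.ofScalars_series_injective ℂ ℂ hpq
  apply herg_ext μ ν hμ0 hν0
  intro n
  have hcn := congrFun hc n
  rcases eq_or_ne n 0 with hn | hn
  · subst hn
    simp only [hergCoeff, reduceIte] at hcn
    have : (μ Set.univ).toReal = (ν Set.univ).toReal := by exact_mod_cast hcn
    simp only [pow_zero, integral_const, smul_eq_mul, mul_one, measureReal_def, this]
  · simp only [hergCoeff, if_neg hn] at hcn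
    exact mul_left_cancel₀ two_ne_zero hcn

theorem stmt_18 (Q : ℂ → Set ℝ → ℂ) (Pi0 : Set ℝ → Measure ℂ)
    (hol : ∀ B : Set ℝ, MeasurableSet B → IsBounded B →
      DifferentiableOn ℂ (fun z => Q z B) (Metric.ball 0 1))
    (hre : ∀ B : Set ℝ, MeasurableSet B → IsBounded B →
      ∀ z ∈ Metric.ball (0 : ℂ) 1, 0 ≤ (Q z B).re)
    (hσadd : ∀ z ∈ Metric.ball (0 : ℂ) 1, ∀ B : ℕ → Set ℝ,
      (∀ n, MeasurableSet (B n)) → Pairwise (Function.onFun Disjoint B) →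
      IsBounded (⋃ n, B n) → HasSum (fun n => Q z (B n)) (Q z (⋃ n, B n)))
    (hnoatom : ∀ z ∈ Metric.ball (0 : ℂ) 1, ∀ t : ℝ, Q z {t} = 0)
    (hfin : ∀ B : Set ℝ, MeasurableSet B → IsBounded B → IsFiniteMeasure (Pi0 B))
    (hsupp : ∀ B : Set ℝ, (Pi0 B) (Metric.sphere (0 : ℂ) 1)ᶜ = 0)
    (hrep : ∀ B : Set ℝ, MeasurableSet B → IsBounded B →
      ∀ z ∈ Metric.ball (0 : ℂ) 1,
        Q z B = Complex.I * ((Q 0 B).im : ℂ) + ∫ ξ, (1 + ξ * z) / (1 - ξ * z) ∂(Pi0 B))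
    (T : ℝ) (B : ℕ → Set ℝ) (hB : ∀ n, MeasurableSet (B n))
    (hBT : ∀ n, B n ⊆ Set.Icc 0 T) (hdisj : Pairwise (Function.onFun Disjoint B)) :
    HasSum (fun n => (Q 0 (B n)).im) ((Q 0 (⋃ n, B n)).im) ∧
    ∀ A : Set ℂ, MeasurableSet A → Pi0 (⋃ n, B n) A = ∑' n, Pi0 (B n) A := by
  have h0mem : (0:ℂ) ∈ Metric.ball (0:ℂ) 1 := by simp
  set U := ⋃ n, B n with hU
  have hUm : MeasurableSet U := MeasurableSet.iUnion hB
  have hUb : IsBounded U := (Metric.isBounded_Icc (0:ℝ) T).subset (Set.iUnion_subset hBT)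
  have hBb : ∀ n, IsBounded (B n) := fun n => (Metric.isBounded_Icc 0 T).subset (hBT n)
  have hsum0 := hσadd 0 h0mem B hB hdisj hUb
  have part1 : HasSum (fun n => (Q 0 (B n)).im) ((Q 0 U).im) := by
    simpa using Complex.imCLM.hasSum hsum0
  refine ⟨part1, ?_⟩
  haveI hμfin : IsFiniteMeasure (Pi0 U) := hfin U hUm hUb
  haveI hBfin : ∀ n, IsFiniteMeasure (Pi0 (B n)) := fun n => hfin _ (hB n) (hBb n)
  have hzero : ∀ C : Set ℝ, MeasurableSet C → IsBounded C → IsFiniteMeasure (Pi0 C) →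
      Q 0 C = Complex.I * ((Q 0 C).im : ℂ) + ((Pi0 C Set.univ).toReal : ℂ) := by
    intro C hCm hCb hCf
    have h := hrep C hCm hCb 0 h0mem
    simpa [integral_const, smul_eq_mul, measureReal_def] using h
  have hre0 : ∀ C : Set ℝ, MeasurableSet C → IsBounded C → IsFiniteMeasure (Pi0 C) →
      (Q 0 C).re = (Pi0 C Set.univ).toReal := by
    intro C hCm hCb hCf
    have h := congrArg Complex.re (hzero C hCm hCb hCf)
    simpa using h
  set ν : Measure ℂ := Measure.sum (fun n => Pi0 (B n)) with hν
  have hresum : HasSum (fun n => (Pi0 (B n) Set.univ).toReal) ((Pi0 U Set.univ).toReal) := by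
    have h := Complex.reCLM.hasSum hsum0
    have hf : (fun n => Complex.reCLM (Q 0 (B n)))
        = fun n => (Pi0 (B n) Set.univ).toReal := by
      funext n; exact hre0 (B n) (hB n) (hBb n) (hBfin n)
    rw [hf] at h
    have hg : Complex.reCLM (Q 0 U) = (Pi0 U Set.univ).toReal := hre0 U hUm hUb hμfin
    rwa [hg] at h
  haveI hνfin : IsFiniteMeasure ν := by
    constructor
    rw [hν, Measure.sum_apply _ MeasurableSet.univ]
    have heq : ∑' n, Pi0 (B n) Set.univ
        = ENNReal.ofReal ((Pi0 U Set.univ).toReal) := by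
      calc ∑' n, Pi0 (B n) Set.univ
          = ∑' n, ENNReal.ofReal ((Pi0 (B n) Set.univ).toReal) := by
            congr 1; funext n; rw [ENNReal.ofReal_toReal (measure_ne_top _ _)]
        _ = ENNReal.ofReal (∑' n, (Pi0 (B n) Set.univ).toReal) :=
            (ENNReal.ofReal_tsum_of_nonneg (fun n => ENNReal.toReal_nonneg)
              hresum.summable).symm
        _ = ENNReal.ofReal ((Pi0 U Set.univ).toReal) := by rw [hresum.tsum_eq]
    rw [heq]
    exact ENNReal.ofReal_lt_top
  have hνsupp : ν (Metric.sphere (0:ℂ) 1)ᶜ = 0 := by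
    rw [hν, Measure.sum_apply _ Metric.isClosed_sphere.measurableSet.compl]
    simp [hsupp]
  have htrans : ∀ z ∈ Metric.ball (0:ℂ) 1,
      ∫ ξ, (1 + ξ * z) / (1 - ξ * z) ∂(Pi0 U) = ∫ ξ, (1 + ξ * z) / (1 - ξ * z) ∂ν := by
    intro z hz
    have hz1 : ‖z‖ < 1 := mem_ball_zero_iff.mp hz
    have hsumz := hσadd z hz B hB hdisj hUb
    have himz : HasSum (fun n => Complex.I * ((Q 0 (B n)).im : ℂ))
        (Complex.I * ((Q 0 U).im : ℂ)) :=
      (Complex.ofRealCLM.hasSum part1).mul_left Complex.I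
    have hint : HasSum (fun n => ∫ ξ, (1 + ξ * z) / (1 - ξ * z) ∂(Pi0 (B n)))
        (∫ ξ, (1 + ξ * z) / (1 - ξ * z) ∂(Pi0 U)) := by
      have h := hsumz.sub himz
      have hfun : (fun n => Q z (B n) - Complex.I * ((Q 0 (B n)).im : ℂ))
          = fun n => ∫ ξ, (1 + ξ * z) / (1 - ξ * z) ∂(Pi0 (B n)) := by
        funext n
        rw [hrep (B n) (hB n) (hBb n) z hz]; ring
      have hval : Q z U - Complex.I * ((Q 0 U).im : ℂ)
          = ∫ ξ, (1 + ξ * z) / (1 - ξ * z) ∂(Pi0 U) := by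
        rw [hrep U hUm hUb z hz]; ring
      rw [hfun, hval] at h
      exact h
    have hKmeas : Measurable fun ξ : ℂ => (1 + ξ * z) / (1 - ξ * z) :=
      ((measurable_const.add (measurable_id.mul_const z)).div
        (measurable_const.sub (measurable_id.mul_const z)))
    have hKν : Integrable (fun ξ : ℂ => (1 + ξ * z) / (1 - ξ * z)) ν := by
      have hb : ∀ᵐ ξ ∂ν, ‖(1 + ξ * z) / (1 - ξ * z)‖ ≤ (1 + ‖z‖) / (1 - ‖z‖) := by
        filter_upwards [herg_sphere_ae ν hνsupp] with ξ hξ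
        rw [norm_div]
        have h1 : ‖1 + ξ * z‖ ≤ 1 + ‖z‖ := by
          calc ‖1 + ξ * z‖ ≤ ‖(1:ℂ)‖ + ‖ξ * z‖ := norm_add_le _ _
          _ = 1 + ‖z‖ := by rw [norm_one, norm_mul, hξ, one_mul]
        have h2 : 1 - ‖z‖ ≤ ‖1 - ξ * z‖ := by
          calc 1 - ‖z‖ = ‖(1:ℂ)‖ - ‖ξ * z‖ := by rw [norm_one, norm_mul, hξ, one_mul]
          _ ≤ ‖1 - ξ * z‖ := norm_sub_norm_le _ _
        apply div_le_div₀ (by positivity) h1 (by linarith) h2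
      exact Integrable.mono' (integrable_const _) hKmeas.aestronglyMeasurable hb
    rw [hν, integral_sum_measure hKν]
    exact hint.tsum_eq.symm
  have hmeq : Pi0 U = ν := herg_unique (Pi0 U) ν (hsupp U) hνsupp htrans
  intro A hA
  rw [hmeq, hν, Measure.sum_apply _ hA]
end
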